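/- arXiv:2208.06184 — 5 statements merged into one kernel-verified Lean document; each statement's English description precedes it below -/
import Mathlib

section
/- Let f and g be real polynomials with g odd and x·g(x) > 0 for all x ≠ 0. Then condition (iv) holds, i.e. F(x₁) = F(x₂) whenever x₁ < 0 < x₂ and G(x₁) = G(x₂), if and only if f is an odd polynomial. -/
private lemma poly_int_hasDerivAt (p : Polynomial ℝ) (x : ℝ) :
    HasDerivAt (fun y => ∫ t in (0:ℝ)..y, p.eval t) (p.eval x) x :=
  intervalIntegral.integral_hasDerivAt_right
    (p.continuous.intervalIntegrable 0 x)
    (p.continuous.stronglyMeasurable.stronglyMeasurableAtFilter)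
    p.continuous.continuousAt

private lemma poly_int_even (p : Polynomial ℝ) (hodd : ∀ x : ℝ, p.eval (-x) = -p.eval x)
    (x : ℝ) : (∫ t in (0:ℝ)..(-x), p.eval t) = ∫ t in (0:ℝ)..x, p.eval t := by
  have h := intervalIntegral.integral_comp_neg (a := (0:ℝ)) (b := x) (fun t => p.eval t)
  simp only [hodd, neg_zero, intervalIntegral.integral_neg] at h
  rw [intervalIntegral.integral_symm 0 (-x)] at h
  linarith

theorem condition_iv_iff_f_odd (f g : Polynomial ℝ)
    (hgodd : ∀ x : ℝ, g.eval (-x) = -g.eval x)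
    (hgpos : ∀ x : ℝ, x ≠ 0 → x * g.eval x > 0)
    (F G : ℝ → ℝ)
    (hF : ∀ x : ℝ, F x = ∫ t in (0 : ℝ)..x, f.eval t)
    (hG : ∀ x : ℝ, G x = ∫ t in (0 : ℝ)..x, g.eval t) :
    (∀ x₁ x₂ : ℝ, x₁ < 0 → 0 < x₂ → G x₁ = G x₂ → F x₁ = F x₂) ↔
      (∀ x : ℝ, f.eval (-x) = -f.eval x) := by
  have hF' : F = fun x => ∫ t in (0 : ℝ)..x, f.eval t := funext hF
  have hG' : G = fun x => ∫ t in (0 : ℝ)..x, g.eval t := funext hG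
  subst hF' hG'
  have hGeven : ∀ x : ℝ, (∫ t in (0:ℝ)..(-x), g.eval t) = ∫ t in (0:ℝ)..x, g.eval t :=
    poly_int_even g hgodd
  constructor
  · intro hcond x
    -- first: evenness of F
    have hFeven : ∀ x : ℝ, (∫ t in (0:ℝ)..(-x), f.eval t) = ∫ t in (0:ℝ)..x, f.eval t := by
      intro y
      rcases lt_trichotomy y 0 with hy | hy | hy
      · exact (hcond y (-y) hy (by linarith) (hGeven y).symm).symm
      · simp [hy]
      · exact hcond (-y) y (by linarith) hy (hGeven y)
    -- derivative argument
    have h1 : HasDerivAt (fun y => ∫ t in (0:ℝ)..y, f.eval t) (f.eval x) x :=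
      poly_int_hasDerivAt f x
    have h2 : HasDerivAt (fun y => ∫ t in (0:ℝ)..(-y), f.eval t) (-f.eval (-x)) x := by
      have := (poly_int_hasDerivAt f (-x)).comp x (hasDerivAt_neg x)
      simpa [mul_comm, Function.comp_def] using this
    have h2' : HasDerivAt (fun y => ∫ t in (0:ℝ)..y, f.eval t) (-f.eval (-x)) x := by
      refine h2.congr_of_eventuallyEq ?_
      filter_upwards with y using (hFeven y).symm
    have := h1.unique h2'
    linarith
  · intro hfodd x₁ x₂ hx1 hx2 hGeq
    -- G strictly mono on Ici 0
    have hGd : ∀ y : ℝ, HasDerivAt (fun y => ∫ t in (0:ℝ)..y, g.eval t) (g.eval y) y :=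
      poly_int_hasDerivAt g
    have hmono : StrictMonoOn (fun y => ∫ t in (0:ℝ)..y, g.eval t) (Set.Ici (0:ℝ)) := by
      apply strictMonoOn_of_deriv_pos (convex_Ici 0)
      · exact fun y _ => ((hGd y).differentiableAt).continuousAt.continuousWithinAt
      · intro y hy
        rw [interior_Ici] at hy
        rw [(hGd y).deriv]
        have hy' : (0:ℝ) < y := hy
        have := hgpos y (ne_of_gt hy')
        nlinarith
    have hx2' : (-x₁ : ℝ) ∈ Set.Ici (0:ℝ) := by simp; linarith
    have heq : -x₁ = x₂ := by
      apply hmono.injOn hx2' (Set.mem_Ici.mpr hx2.le)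
      show (∫ t in (0:ℝ)..(-x₁), g.eval t) = ∫ t in (0:ℝ)..x₂, g.eval t
      rw [hGeven x₁]; exact hGeq
    have hFeven := poly_int_even f hfodd x₁
    show (∫ t in (0:ℝ)..x₁, f.eval t) = ∫ t in (0:ℝ)..x₂, f.eval t
    rw [← heq]; exact hFeven.symm
end

section
/- For every real c with 0 < |c| < 2√2, the quintic Liénard system x' = y, y' = -(x³ + x⁵) - c·x·y has a global center of nilpotent type at the origin. -/
/-- `γ : ℝ → ℝ × ℝ` is a solution of the Liénard system
`x' = y`, `y' = -g(x) - f(x)·y` on all of `ℝ`. -/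
def IsLienardSolution (g f : ℝ → ℝ) (γ : ℝ → ℝ × ℝ) : Prop :=
  ∀ t : ℝ,
    HasDerivAt (fun τ => (γ τ).1) ((γ t).2) t ∧
    HasDerivAt (fun τ => (γ τ).2) (-(g ((γ t).1)) - f ((γ t).1) * (γ t).2) t

/-- The origin is a global center of the Liénard system `x' = y, y' = -g(x) - f(x)·y`. -/
def IsGlobalCenter (g f : ℝ → ℝ) : Prop :=
  g 0 = 0 ∧
  ∀ p : ℝ × ℝ, p ≠ (0, 0) →
    ∃ T > (0 : ℝ), ∃ γ : ℝ → ℝ × ℝ,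
      IsLienardSolution g f γ ∧ γ 0 = p ∧ (∀ t, γ (t + T) = γ t) ∧ ¬(∀ t, γ t = p)


open Set Real Metric Filter
open scoped NNReal ENNReal Topology

noncomputable section

namespace QL

/-- The Liénard vector field. -/
def vf (c : ℝ) (p : ℝ × ℝ) : ℝ × ℝ :=
  (p.2, -(p.1 ^ 3 + p.1 ^ 5) - c * p.1 * p.2)

lemma contDiff_vf (c : ℝ) : ContDiff ℝ 1 (vf c) := by
  unfold vf
  exact (contDiff_snd).prodMk
    ((((contDiff_fst.pow 3).add (contDiff_fst.pow 5)).neg).sub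
      (((contDiff_const.mul contDiff_fst)).mul contDiff_snd))

/-- clamp a real number to `[-R, R]`. -/
def clampR (R a : ℝ) : ℝ := max (-R) (min R a)

lemma clampR_eq {R a : ℝ} (h : |a| ≤ R) : clampR R a = a := by
  rw [abs_le] at h
  unfold clampR
  rw [min_eq_right h.2, max_eq_right h.1]

lemma abs_clampR {R : ℝ} (hR : 0 ≤ R) (a : ℝ) : |clampR R a| ≤ R := by
  unfold clampR
  rw [abs_le]
  constructor
  · exact le_max_left _ _
  · exact max_le (by linarith) (min_le_left _ _)

lemma lipschitz_clampR (R : ℝ) : LipschitzWith 1 (clampR R) :=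
  (LipschitzWith.id.const_min R).const_max (-R)

/-- clamp a point to the sup-norm ball `[-R,R]²`. -/
def clampP (R : ℝ) (p : ℝ × ℝ) : ℝ × ℝ := (clampR R p.1, clampR R p.2)

lemma norm_pair (p : ℝ × ℝ) : ‖p‖ = max |p.1| |p.2| := by
  rw [Prod.norm_def, Real.norm_eq_abs, Real.norm_eq_abs]

lemma clampP_eq {R : ℝ} {p : ℝ × ℝ} (h : ‖p‖ ≤ R) : clampP R p = p := by
  rw [norm_pair, max_le_iff] at h
  unfold clampP
  rw [clampR_eq h.1, clampR_eq h.2]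

lemma norm_clampP {R : ℝ} (hR : 0 ≤ R) (p : ℝ × ℝ) : ‖clampP R p‖ ≤ R := by
  rw [norm_pair]
  exact max_le (abs_clampR hR _) (abs_clampR hR _)

lemma lipschitz_clampP (R : ℝ) : LipschitzWith 1 (clampP R) := by
  have h1 : LipschitzWith 1 (fun p : ℝ × ℝ => clampR R p.1) :=
    by simpa [Function.comp_def] using (lipschitz_clampR R).comp LipschitzWith.prod_fst
  have h2 : LipschitzWith 1 (fun p : ℝ × ℝ => clampR R p.2) :=
    by simpa [Function.comp_def] using (lipschitz_clampR R).comp LipschitzWith.prod_snd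
  have := h1.prodMk h2
  rw [max_self] at this
  exact this

/-- the truncated field -/
def wf (c R : ℝ) (p : ℝ × ℝ) : ℝ × ℝ := vf c (clampP R p)

lemma wf_eq {c R : ℝ} {p : ℝ × ℝ} (h : ‖p‖ ≤ R) : wf c R p = vf c p := by
  unfold wf; rw [clampP_eq h]

lemma exists_lipschitzOnWith_vf (c R : ℝ) :
    ∃ L : ℝ≥0, LipschitzOnWith L (vf c) (closedBall 0 R) := by
  have hcont : Continuous fun z => fderiv ℝ (vf c) z :=
    (contDiff_vf c).continuous_fderiv one_ne_zero
  obtain ⟨C, hC⟩ := (isCompact_closedBall (0 : ℝ × ℝ) R).exists_bound_of_continuousOn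
    (hcont.continuousOn (s := closedBall 0 R))
  have hC0 : 0 ≤ max C 0 := le_max_right _ _
  refine ⟨⟨max C 0, hC0⟩, ?_⟩
  apply Convex.lipschitzOnWith_of_nnnorm_fderiv_le
    (fun z _ => ((contDiff_vf c).differentiable one_ne_zero).differentiableAt)
    (fun z hz => ?_) (convex_closedBall 0 R)
  apply NNReal.coe_le_coe.mp
  rw [coe_nnnorm]
  exact le_trans (hC z hz) (le_max_left _ _)

lemma exists_lipschitz_wf (c R : ℝ) (hR : 0 ≤ R) :
    ∃ K : ℝ≥0, LipschitzWith K (wf c R) := by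
  obtain ⟨L, hL⟩ := exists_lipschitzOnWith_vf c R
  refine ⟨L * 1, ?_⟩
  intro a b
  have h1 : clampP R a ∈ closedBall (0 : ℝ × ℝ) R := by
    rw [mem_closedBall, dist_zero_right]; exact norm_clampP hR a
  have h2 : clampP R b ∈ closedBall (0 : ℝ × ℝ) R := by
    rw [mem_closedBall, dist_zero_right]; exact norm_clampP hR b
  calc edist (wf c R a) (wf c R b) ≤ L * edist (clampP R a) (clampP R b) := hL h1 h2
    _ ≤ L * (1 * edist a b) := by
        exact mul_le_mul_right (lipschitz_clampP R a b) L
    _ = (L * 1 : ℝ≥0) * edist a b := by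
        rw [ENNReal.coe_mul]; rw [one_mul, ENNReal.coe_one, mul_one]

lemma exists_bound_wf (c R : ℝ) (hR : 0 ≤ R) :
    ∃ C : ℝ, ∀ z, ‖wf c R z‖ ≤ C := by
  obtain ⟨C, hC⟩ := (isCompact_closedBall (0 : ℝ × ℝ) R).exists_bound_of_continuousOn
    (((contDiff_vf c).continuous).continuousOn (s := closedBall 0 R))
  refine ⟨C, fun z => ?_⟩
  apply hC
  rw [mem_closedBall, dist_zero_right]; exact norm_clampP hR z


/-- Global solutions exist for a bounded globally Lipschitz field. -/
lemma exists_global_solution {w : ℝ × ℝ → ℝ × ℝ} {K : ℝ≥0} (hK : LipschitzWith K w)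
    {C : ℝ} (hC : ∀ z, ‖w z‖ ≤ C) (q : ℝ × ℝ) :
    ∃ γ : ℝ → ℝ × ℝ, γ 0 = q ∧ ∀ t, HasDerivAt γ (w (γ t)) t := by
  have hC0 : 0 ≤ C := le_trans (norm_nonneg _) (hC 0)
  -- solutions on [-(n+1), n+1]
  have hsol : ∀ n : ℕ, ∃ f : ℝ → ℝ × ℝ, f 0 = q ∧
      ∀ t ∈ Icc (-(n + 1 : ℝ)) (n + 1 : ℝ),
        HasDerivWithinAt f (w (f t)) (Icc (-(n + 1 : ℝ)) (n + 1 : ℝ)) t := by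
    intro n
    have hn1 : (0 : ℝ) ≤ (n : ℝ) + 1 := by positivity
    have hpl : IsPicardLindelof (fun _ p => w p) (tmin := -(n + 1 : ℝ)) (tmax := (n + 1 : ℝ))
        ⟨0, by constructor <;> linarith⟩ q ⟨C * (n + 1) + 1, by positivity⟩ 0 ⟨C, hC0⟩ K := by
      apply IsPicardLindelof.of_time_independent
      · intro z _
        exact hC z
      · exact hK.lipschitzOnWith
      · show C * max (((n : ℝ) + 1) - 0) (0 - -((n : ℝ) + 1)) ≤
          (C * (n + 1) + 1) - ((0 : ℝ≥0) : ℝ)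
        have hmx : max ((n + 1 : ℝ) - 0) (0 - -(n + 1 : ℝ)) = (n + 1 : ℝ) := by
          rw [sub_zero, zero_sub, neg_neg, max_self]
        rw [hmx, NNReal.coe_zero, sub_zero]; nlinarith
    obtain ⟨f, hf0, hf⟩ := IsPicardLindelof.exists_eq_forall_mem_Icc_hasDerivWithinAt₀ hpl
    exact ⟨f, hf0, fun t ht => (hf t ht)⟩
  choose sol hsol0 hsolD using hsol
  have hcont : ∀ n : ℕ, ContinuousOn (sol n) (Icc (-(n + 1 : ℝ)) (n + 1 : ℝ)) := by
    intro n t ht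
    exact (hsolD n t ht).continuousWithinAt
  -- interior two-sided derivatives
  have hD : ∀ (n : ℕ) (t : ℝ), t ∈ Ioo (-(n + 1 : ℝ)) (n + 1 : ℝ) →
      HasDerivAt (sol n) (w (sol n t)) t := by
    intro n t ht
    exact (hsolD n t (Ioo_subset_Icc_self ht)).hasDerivAt (Icc_mem_nhds ht.1 ht.2)
  -- agreement
  have hagree : ∀ m n : ℕ, ∀ t : ℝ, |t| ≤ min (m : ℝ) n + 1 → sol m t = sol n t := by
    intro m n t ht
    set μ := min (m : ℝ) n with hμ
    have hμ0 : (0 : ℝ) ≤ μ := le_min (Nat.cast_nonneg m) (Nat.cast_nonneg n)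
    have hμm : μ ≤ (m : ℝ) := min_le_left _ _
    have hμn : μ ≤ (n : ℝ) := min_le_right _ _
    have hsubm : Ioo (-(μ + 1)) (μ + 1) ⊆ Ioo (-(m + 1 : ℝ)) (m + 1 : ℝ) :=
      Ioo_subset_Ioo (by linarith) (by linarith)
    have hsubn : Ioo (-(μ + 1)) (μ + 1) ⊆ Ioo (-(n + 1 : ℝ)) (n + 1 : ℝ) :=
      Ioo_subset_Ioo (by linarith) (by linarith)
    have h0 : (0 : ℝ) ∈ Ioo (-(μ + 1)) (μ + 1) := by
      rw [mem_Ioo]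
      constructor <;> linarith
    have key : EqOn (sol m) (sol n) (Icc (-(μ + 1)) (μ + 1)) := by
      apply ODE_solution_unique_of_mem_Icc (v := fun _ p => w p)
        (s := fun _ => (univ : Set (ℝ × ℝ))) (K := K)
        (fun _ _ => hK.lipschitzOnWith) h0
      · exact (hcont m).mono (Icc_subset_Icc (by linarith) (by linarith))
      · intro t' ht'
        exact hD m t' (hsubm ht')
      · intro t' _; exact mem_univ _
      · exact (hcont n).mono (Icc_subset_Icc (by linarith) (by linarith))
      · intro t' ht'
        exact hD n t' (hsubn ht')
      · intro t' _; exact mem_univ _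
      · rw [hsol0 m, hsol0 n]
    apply key
    rw [mem_Icc]
    rw [abs_le] at ht
    exact ⟨by linarith [ht.1], ht.2⟩
  refine ⟨fun t => sol ⌈|t|⌉₊ t, ?_, ?_⟩
  · simpa using hsol0 ⌈|(0 : ℝ)|⌉₊
  · intro t
    set n := ⌈|t|⌉₊ with hn
    have htn : |t| ≤ (n : ℝ) := Nat.le_ceil _
    have ht : t ∈ Ioo (-(n + 1 : ℝ)) (n + 1 : ℝ) := by
      rw [abs_le] at htn
      constructor <;> [linarith [htn.1]; linarith [htn.2]]
    have heq : ∀ s ∈ Ioo (-(n + 1 : ℝ)) (n + 1 : ℝ), sol ⌈|s|⌉₊ s = sol n s := by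
      intro s hs
      apply hagree
      have hs' : |s| ≤ (n : ℝ) + 1 := by
        rw [abs_le]; exact ⟨le_of_lt hs.1, le_of_lt hs.2⟩
      rcases le_total ((⌈|s|⌉₊ : ℝ)) (n : ℝ) with h | h
      · rw [min_eq_left h]; linarith [Nat.le_ceil |s|]
      · rw [min_eq_right h]; linarith
    have hev : (fun s => sol ⌈|s|⌉₊ s) =ᶠ[nhds t] sol n :=
      Filter.eventuallyEq_of_mem (isOpen_Ioo.mem_nhds ht) heq
    have := (hD n t ht).congr_of_eventuallyEq hev
    rwa [show sol n t = sol ⌈|t|⌉₊ t from (heq t ht).symm] at this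


lemma hasDerivAt_fst {γ : ℝ → ℝ × ℝ} {v : ℝ × ℝ} {t : ℝ} (h : HasDerivAt γ v t) :
    HasDerivAt (fun s => (γ s).1) v.1 t :=
  (ContinuousLinearMap.fst ℝ ℝ ℝ).hasFDerivAt.comp_hasDerivAt t h

lemma hasDerivAt_snd {γ : ℝ → ℝ × ℝ} {v : ℝ × ℝ} {t : ℝ} (h : HasDerivAt γ v t) :
    HasDerivAt (fun s => (γ s).2) v.2 t :=
  (ContinuousLinearMap.snd ℝ ℝ ℝ).hasFDerivAt.comp_hasDerivAt t h

/-- If `F t₀ = 0` and `F' t₀ > 0` then `F > 0` just to the right. -/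
lemma eventually_pos_right {F : ℝ → ℝ} {d t₀ : ℝ} (hF : HasDerivAt F d t₀) (hd : 0 < d)
    (h0 : F t₀ = 0) : ∀ᶠ s in 𝓝[>] t₀, 0 < F s := by
  have h1 : ∀ᶠ s in 𝓝[≠] t₀, 0 < slope F t₀ s :=
    (hasDerivAt_iff_tendsto_slope.mp hF).eventually (eventually_gt_nhds hd)
  have h2 : ∀ᶠ s in 𝓝[>] t₀, 0 < slope F t₀ s :=
    h1.filter_mono (nhdsWithin_mono t₀ (fun s hs => ne_of_gt hs))
  filter_upwards [h2, self_mem_nhdsWithin] with s hs hs'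
  rw [slope_def_field, h0, sub_zero] at hs
  have hst : 0 < s - t₀ := sub_pos.mpr hs'
  have := mul_pos hs hst
  rw [div_mul_cancel₀] at this
  · exact this
  · exact ne_of_gt hst

/-- If `F t₀ = 0` and `F' t₀ < 0` then `F > 0` just to the left. -/
lemma eventually_pos_left {F : ℝ → ℝ} {d t₀ : ℝ} (hF : HasDerivAt F d t₀) (hd : d < 0)
    (h0 : F t₀ = 0) : ∀ᶠ s in 𝓝[<] t₀, 0 < F s := by
  have h1 : ∀ᶠ s in 𝓝[≠] t₀, slope F t₀ s < 0 :=
    (hasDerivAt_iff_tendsto_slope.mp hF).eventually (eventually_lt_nhds hd)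
  have h2 : ∀ᶠ s in 𝓝[<] t₀, slope F t₀ s < 0 :=
    h1.filter_mono (nhdsWithin_mono t₀ (fun s hs => ne_of_lt hs))
  filter_upwards [h2, self_mem_nhdsWithin] with s hs hs'
  rw [slope_def_field, h0, sub_zero] at hs
  have hst : s - t₀ < 0 := sub_neg.mpr hs'
  have := mul_pos_of_neg_of_neg hs hst
  rw [div_mul_cancel₀] at this
  · exact this
  · exact ne_of_lt hst

/-- If `F t₀ = 0` and `F' t₀ > 0` then `F < 0` just to the left. -/
lemma eventually_neg_left {F : ℝ → ℝ} {d t₀ : ℝ} (hF : HasDerivAt F d t₀) (hd : 0 < d)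
    (h0 : F t₀ = 0) : ∀ᶠ s in 𝓝[<] t₀, F s < 0 := by
  have := eventually_pos_left (F := fun s => -(F s)) (hF.neg) (by linarith) (by simp [h0])
  filter_upwards [this] with s hs
  linarith

lemma monoOn_Icc_of_hasDerivAt {F F' : ℝ → ℝ} {a b : ℝ}
    (hF : ∀ t ∈ Icc a b, HasDerivAt F (F' t) t) (h0 : ∀ t ∈ Ioo a b, 0 ≤ F' t) :
    MonotoneOn F (Icc a b) := by
  apply monotoneOn_of_deriv_nonneg (convex_Icc a b)
  · exact fun t ht => (hF t ht).continuousAt.continuousWithinAt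
  · intro t ht
    rw [interior_Icc] at ht
    exact ((hF t (Ioo_subset_Icc_self ht)).differentiableAt).differentiableWithinAt
  · intro t ht
    rw [interior_Icc] at ht
    rw [(hF t (Ioo_subset_Icc_self ht)).deriv]
    exact h0 t ht

lemma antitoneOn_Icc_of_hasDerivAt {F F' : ℝ → ℝ} {a b : ℝ}
    (hF : ∀ t ∈ Icc a b, HasDerivAt F (F' t) t) (h0 : ∀ t ∈ Ioo a b, F' t ≤ 0) :
    AntitoneOn F (Icc a b) := by
  have := monoOn_Icc_of_hasDerivAt (F := fun t => -(F t)) (F' := fun t => -(F' t))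
    (fun t ht => (hF t ht).neg) (fun t ht => by simpa using h0 t ht)
  intro s hs t ht hst
  have h2 := this hs ht hst
  simp only [] at h2
  linarith

/-- The key quadratic estimate coming from `c² < 8`. -/
lemma key_quad {c : ℝ} (hc : c ^ 2 < 8) (u : ℝ) :
    (8 - c ^ 2) / 12 * (1 + u ^ 2) ≤ 2 * u ^ 2 - c * u + 1 := by
  nlinarith [sq_nonneg ((16 + c ^ 2) * u - 6 * c), sq_nonneg (c ^ 2 - 8), sq_nonneg u,
    sq_nonneg c]



/-- `δ` -/
def dd (c : ℝ) : ℝ := (8 - c ^ 2) / 12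

/-- `k` -/
def kk (c : ℝ) : ℝ := 2 * |c| / dd c

lemma dd_pos {c : ℝ} (hc : c ^ 2 < 8) : 0 < dd c := by unfold dd; linarith

lemma kk_nonneg {c : ℝ} (hc : c ^ 2 < 8) : 0 ≤ kk c := by
  have := dd_pos hc
  unfold kk
  positivity

lemma kk_mul_dd {c : ℝ} (hc : c ^ 2 < 8) : kk c * dd c = 2 * |c| := by
  have := dd_pos hc
  unfold kk
  field_simp

/-- energy -/
def Efun (γ : ℝ → ℝ × ℝ) : ℝ → ℝ :=
  fun s => ((γ s).2) ^ 2 / 2 + ((γ s).1) ^ 4 / 4 + ((γ s).1) ^ 6 / 6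

/-- `u = -y/x²` -/
def Ufun (γ : ℝ → ℝ × ℝ) : ℝ → ℝ := fun s => -((γ s).2) / ((γ s).1) ^ 2

/-- `A = arctan u` -/
def Afun (γ : ℝ → ℝ × ℝ) : ℝ → ℝ := fun s => arctan (Ufun γ s)

lemma Afun_lt (γ : ℝ → ℝ × ℝ) (s : ℝ) : Afun γ s < π / 2 := arctan_lt_pi_div_two _

lemma lt_Afun (γ : ℝ → ℝ × ℝ) (s : ℝ) : -(π / 2) < Afun γ s := neg_pi_div_two_lt_arctan _

lemma Efun_nonneg (γ : ℝ → ℝ × ℝ) (s : ℝ) : 0 ≤ Efun γ s := by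
  unfold Efun; positivity

lemma sq_snd_le_two_Efun (γ : ℝ → ℝ × ℝ) (s : ℝ) : ((γ s).2) ^ 2 ≤ 2 * Efun γ s := by
  unfold Efun
  nlinarith [sq_nonneg ((γ s).1 ^ 2), sq_nonneg ((γ s).1 ^ 3)]

section deriv

variable {c : ℝ} {γ : ℝ → ℝ × ℝ} {t : ℝ}

lemma hasDerivAt_X (hd : HasDerivAt γ (vf c (γ t)) t) :
    HasDerivAt (fun s => (γ s).1) ((γ t).2) t := hasDerivAt_fst hd

lemma hasDerivAt_Y (hd : HasDerivAt γ (vf c (γ t)) t) :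
    HasDerivAt (fun s => (γ s).2)
      (-(((γ t).1) ^ 3 + ((γ t).1) ^ 5) - c * (γ t).1 * (γ t).2) t := hasDerivAt_snd hd

lemma hasDerivAt_E (hd : HasDerivAt γ (vf c (γ t)) t) :
    HasDerivAt (Efun γ) (-c * (γ t).1 * ((γ t).2) ^ 2) t := by
  have hX := hasDerivAt_X hd
  have hY := hasDerivAt_Y hd
  have h1 := (((hY.pow 2).div_const 2).add ((hX.pow 4).div_const 4)).add
    ((hX.pow 6).div_const 6)
  refine h1.congr_deriv ?_
  simp only [Pi.pow_apply, Pi.neg_apply, Nat.cast_ofNat, Nat.reduceSub]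
  ring

lemma hasDerivAt_U (hd : HasDerivAt γ (vf c (γ t)) t) (hx : (γ t).1 ≠ 0) :
    HasDerivAt (Ufun γ)
      ((γ t).1 * (2 * (Ufun γ t) ^ 2 - c * Ufun γ t + 1 + ((γ t).1) ^ 2)) t := by
  have hX := hasDerivAt_X hd
  have hY := hasDerivAt_Y hd
  have h1 := (hY.neg).div (hX.pow 2) (pow_ne_zero 2 hx)
  refine h1.congr_deriv ?_
  simp only [Pi.pow_apply, Pi.neg_apply, Nat.cast_ofNat, Nat.reduceSub]
  unfold Ufun
  field_simp
  ring

lemma hasDerivAt_A (hd : HasDerivAt γ (vf c (γ t)) t) (hx : (γ t).1 ≠ 0) :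
    HasDerivAt (Afun γ)
      (1 / (1 + (Ufun γ t) ^ 2) *
        ((γ t).1 * (2 * (Ufun γ t) ^ 2 - c * Ufun γ t + 1 + ((γ t).1) ^ 2))) t :=
  (Real.hasDerivAt_arctan (Ufun γ t)).comp t (hasDerivAt_U hd hx)

/-- the key lower bound on A'. -/
lemma Aprime_lower {c : ℝ} (hc : c ^ 2 < 8) {x u : ℝ} (hx : 0 ≤ x) :
    dd c * x ≤ 1 / (1 + u ^ 2) * (x * (2 * u ^ 2 - c * u + 1 + x ^ 2)) := by
  have h1 : (0 : ℝ) < 1 + u ^ 2 := by positivity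
  have hq : dd c * (1 + u ^ 2) ≤ 2 * u ^ 2 - c * u + 1 := by
    unfold dd
    nlinarith [sq_nonneg ((16 + c ^ 2) * u - 6 * c), sq_nonneg (c ^ 2 - 8), sq_nonneg u,
      sq_nonneg c]
  rw [one_div, inv_mul_eq_div, le_div_iff₀ h1]
  nlinarith [mul_le_mul_of_nonneg_left hq hx, mul_nonneg hx (sq_nonneg x)]

end deriv

end QL

namespace QL2
open QL

lemma monoOn' {F : ℝ → ℝ} {a b : ℝ}
    (hF : ∀ t ∈ Icc a b, ∃ d, HasDerivAt F d t ∧ 0 ≤ d) : MonotoneOn F (Icc a b) := by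
  choose d hd h0 using hF
  apply monotoneOn_of_deriv_nonneg (convex_Icc a b)
  · exact fun t ht => (hd t ht).continuousAt.continuousWithinAt
  · intro t ht
    rw [interior_Icc] at ht
    exact ((hd t (Ioo_subset_Icc_self ht)).differentiableAt).differentiableWithinAt
  · intro t ht
    rw [interior_Icc] at ht
    rw [(hd t (Ioo_subset_Icc_self ht)).deriv]
    exact h0 t (Ioo_subset_Icc_self ht)

lemma antitoneOn' {F : ℝ → ℝ} {a b : ℝ}
    (hF : ∀ t ∈ Icc a b, ∃ d, HasDerivAt F d t ∧ d ≤ 0) : AntitoneOn F (Icc a b) := by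
  have h := monoOn' (F := fun s => -(F s)) (a := a) (b := b) ?_
  · intro s hs t ht hst
    have h2 := h hs ht hst
    simp only [] at h2
    linarith
  · intro t ht
    obtain ⟨d, hd, h0⟩ := hF t ht
    exact ⟨-d, hd.neg, by linarith⟩

/-- derivative of `F · exp(κ A)` -/
lemma hasDerivAt_mul_exp {F A : ℝ → ℝ} {dF dA κ t : ℝ}
    (hF : HasDerivAt F dF t) (hA : HasDerivAt A dA t) :
    HasDerivAt (fun s => F s * exp (κ * A s))
      (dF * exp (κ * A t) + F t * (exp (κ * A t) * (κ * dA))) t :=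
  hF.mul ((hA.const_mul κ).exp)

section monos

variable {c : ℝ} {γ : ℝ → ℝ × ℝ} {a b : ℝ}

lemma mono_EL (hc : c ^ 2 < 8)
    (H : ∀ r ∈ Icc a b, HasDerivAt γ (vf c (γ r)) r ∧ 0 < (γ r).1) :
    MonotoneOn (fun s => Efun γ s * exp (kk c * Afun γ s)) (Icc a b) := by
  apply monoOn'
  intro r hr
  obtain ⟨hd, hx⟩ := H r hr
  have hderiv := hasDerivAt_mul_exp (κ := kk c) (hasDerivAt_E hd)
    (hasDerivAt_A hd (ne_of_gt hx))
  refine ⟨_, hderiv, ?_⟩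
  set x := (γ r).1 with hx'
  set y := (γ r).2 with hy'
  set u := Ufun γ r with hu'
  set E := Efun γ r with hE'
  set dA := 1 / (1 + u ^ 2) * (x * (2 * u ^ 2 - c * u + 1 + x ^ 2)) with hdA
  set e := exp (kk c * Afun γ r) with he'
  have he : 0 < e := exp_pos _
  have hy2 : y ^ 2 ≤ 2 * E := sq_snd_le_two_Efun γ r
  have hE0 : 0 ≤ E := Efun_nonneg γ r
  have hk0 : 0 ≤ kk c := kk_nonneg hc
  have hA' : dd c * x ≤ dA := Aprime_lower hc hx.le
  have h1 : c * (x * y ^ 2) ≤ |c| * (x * y ^ 2) :=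
    mul_le_mul_of_nonneg_right (le_abs_self c) (mul_nonneg hx.le (sq_nonneg y))
  have h2 : |c| * (x * y ^ 2) ≤ |c| * (x * (2 * E)) :=
    mul_le_mul_of_nonneg_left (mul_le_mul_of_nonneg_left hy2 hx.le) (abs_nonneg c)
  have h3 : kk c * (dd c * x) ≤ kk c * dA := mul_le_mul_of_nonneg_left hA' hk0
  have h4 : E * (e * (kk c * (dd c * x))) ≤ E * (e * (kk c * dA)) :=
    mul_le_mul_of_nonneg_left (mul_le_mul_of_nonneg_left h3 he.le) hE0
  have h5 : kk c * (dd c * x) = 2 * |c| * x := by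
    rw [← mul_assoc, kk_mul_dd hc]
  rw [h5] at h4
  have h6 : (-(|c| * (x * (2 * E)))) * e ≤ -c * x * y ^ 2 * e := by
    apply mul_le_mul_of_nonneg_right _ he.le
    nlinarith [h1, h2]
  nlinarith [h4, h6]

lemma anti_EU (hc : c ^ 2 < 8)
    (H : ∀ r ∈ Icc a b, HasDerivAt γ (vf c (γ r)) r ∧ 0 < (γ r).1) :
    AntitoneOn (fun s => Efun γ s * exp (-kk c * Afun γ s)) (Icc a b) := by
  apply antitoneOn'
  intro r hr
  obtain ⟨hd, hx⟩ := H r hr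
  have hderiv := hasDerivAt_mul_exp (κ := -kk c) (hasDerivAt_E hd)
    (hasDerivAt_A hd (ne_of_gt hx))
  refine ⟨_, hderiv, ?_⟩
  set x := (γ r).1 with hx'
  set y := (γ r).2 with hy'
  set u := Ufun γ r with hu'
  set E := Efun γ r with hE'
  set dA := 1 / (1 + u ^ 2) * (x * (2 * u ^ 2 - c * u + 1 + x ^ 2)) with hdA
  set e := exp (-kk c * Afun γ r) with he'
  have he : 0 < e := exp_pos _
  have hy2 : y ^ 2 ≤ 2 * E := sq_snd_le_two_Efun γ r
  have hE0 : 0 ≤ E := Efun_nonneg γ r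
  have hk0 : 0 ≤ kk c := kk_nonneg hc
  have hA' : dd c * x ≤ dA := Aprime_lower hc hx.le
  have h1 : -c * (x * y ^ 2) ≤ |c| * (x * y ^ 2) :=
    mul_le_mul_of_nonneg_right (neg_le_abs c) (mul_nonneg hx.le (sq_nonneg y))
  have h2 : |c| * (x * y ^ 2) ≤ |c| * (x * (2 * E)) :=
    mul_le_mul_of_nonneg_left (mul_le_mul_of_nonneg_left hy2 hx.le) (abs_nonneg c)
  have h3 : kk c * (dd c * x) ≤ kk c * dA := mul_le_mul_of_nonneg_left hA' hk0
  have h4 : E * (e * (kk c * (dd c * x))) ≤ E * (e * (kk c * dA)) :=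
    mul_le_mul_of_nonneg_left (mul_le_mul_of_nonneg_left h3 he.le) hE0
  have h5 : kk c * (dd c * x) = 2 * |c| * x := by
    rw [← mul_assoc, kk_mul_dd hc]
  rw [h5] at h4
  have h6 : -c * x * y ^ 2 * e ≤ |c| * (x * (2 * E)) * e := by
    apply mul_le_mul_of_nonneg_right _ he.le
    nlinarith [h1, h2]
  nlinarith [h4, h6]

lemma mono_Y2 (hc : c ^ 2 < 8)
    (H : ∀ r ∈ Icc a b, HasDerivAt γ (vf c (γ r)) r ∧ 0 < (γ r).1)
    (hy : ∀ r ∈ Icc a b, (γ r).2 ≤ 0) :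
    MonotoneOn (fun s => ((γ s).2) ^ 2 * exp (kk c * Afun γ s)) (Icc a b) := by
  apply monoOn'
  intro r hr
  obtain ⟨hd, hx⟩ := H r hr
  have hyr := hy r hr
  have hderiv := hasDerivAt_mul_exp (κ := kk c)
    ((hasDerivAt_Y hd).pow 2) (hasDerivAt_A hd (ne_of_gt hx))
  refine ⟨_, hderiv, ?_⟩
  push_cast
  norm_num
  set x := (γ r).1 with hx'
  set y := (γ r).2 with hy'
  set u := Ufun γ r with hu'
  set dA := 1 / (1 + u ^ 2) * (x * (2 * u ^ 2 - c * u + 1 + x ^ 2)) with hdA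
  set e := exp (kk c * Afun γ r) with he'
  have he : 0 < e := exp_pos _
  have hk0 : 0 ≤ kk c := kk_nonneg hc
  have hA' : dd c * x ≤ dA := Aprime_lower hc hx.le
  have h3 : kk c * (dd c * x) ≤ kk c * dA := mul_le_mul_of_nonneg_left hA' hk0
  have h4 : y ^ 2 * (e * (kk c * (dd c * x))) ≤ y ^ 2 * (e * (kk c * dA)) :=
    mul_le_mul_of_nonneg_left (mul_le_mul_of_nonneg_left h3 he.le) (sq_nonneg y)
  have h5 : kk c * (dd c * x) = 2 * |c| * x := by
    rw [← mul_assoc, kk_mul_dd hc]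
  rw [h5] at h4
  have h1 : c * (x * y ^ 2) ≤ |c| * (x * y ^ 2) :=
    mul_le_mul_of_nonneg_right (le_abs_self c) (mul_nonneg hx.le (sq_nonneg y))
  have hxy : 0 ≤ -y * (x ^ 3 + x ^ 5) := by
    apply mul_nonneg (by linarith)
    positivity
  have hyy : -(2 * |c| * x * y ^ 2) ≤ 2 * y * (-(x ^ 3 + x ^ 5) - c * x * y) := by
    nlinarith [h1, hxy]
  have h6 : -(2 * |c| * x * y ^ 2) * e ≤ 2 * y * (-(x ^ 3 + x ^ 5) - c * x * y) * e :=
    mul_le_mul_of_nonneg_right hyy he.le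
  rw [hdA, one_div] at h4
  nlinarith [h4, h6]

lemma mono_Alin (hc : c ^ 2 < 8) {ρ : ℝ}
    (H : ∀ r ∈ Icc a b, HasDerivAt γ (vf c (γ r)) r ∧ 0 < (γ r).1)
    (hρ : ∀ r ∈ Icc a b, ρ ≤ (γ r).1) :
    MonotoneOn (fun s => Afun γ s - dd c * ρ * s) (Icc a b) := by
  apply monoOn'
  intro r hr
  obtain ⟨hd, hx⟩ := H r hr
  have hderiv := (hasDerivAt_A hd (ne_of_gt hx)).sub
    ((hasDerivAt_id r).const_mul (dd c * ρ))
  refine ⟨_, hderiv, ?_⟩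
  have hA' : dd c * (γ r).1 ≤ 1 / (1 + (Ufun γ r) ^ 2) *
      ((γ r).1 * (2 * (Ufun γ r) ^ 2 - c * (Ufun γ r) + 1 + ((γ r).1) ^ 2)) :=
    Aprime_lower hc hx.le
  have h2 : dd c * ρ ≤ dd c * (γ r).1 :=
    mul_le_mul_of_nonneg_left (hρ r hr) (dd_pos hc).le
  simp only [mul_one]
  linarith

end monos

section core

variable {c : ℝ} {γ : ℝ → ℝ × ℝ} {a b : ℝ}

lemma exp_transfer {P Q α β : ℝ} (h : P * exp α ≤ Q * exp β) : P ≤ Q * exp (β - α) := by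
  have h2 := mul_le_mul_of_nonneg_right h (exp_pos (-α)).le
  rw [mul_assoc, ← exp_add, mul_assoc, ← exp_add] at h2
  simpa [add_neg_cancel, Real.exp_zero, sub_eq_add_neg] using h2

lemma le_mul_exp_of_exp_pair {P Q α β k' : ℝ} (h : P * exp α ≤ Q * exp β) (hQ : 0 ≤ Q)
    (hd : β - α ≤ k') : P ≤ Q * exp k' :=
  le_trans (exp_transfer h)
    (mul_le_mul_of_nonneg_left (exp_le_exp.mpr hd) hQ)

lemma le_of_exp_pair {P Q α β k' : ℝ} (h : P * exp α ≤ Q * exp β) (hQ : 0 ≤ Q)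
    (hd : β - α ≤ k') : P * exp (-k') ≤ Q := by
  have e2 := exp_transfer h
  calc P * exp (-k') ≤ (Q * exp (β - α)) * exp (-k') :=
        mul_le_mul_of_nonneg_right e2 (exp_pos _).le
    _ = Q * exp (β - α - k') := by rw [mul_assoc, ← exp_add]; ring_nf
    _ ≤ Q * 1 := by
        apply mul_le_mul_of_nonneg_left _ hQ
        rw [← Real.exp_zero]
        exact exp_le_exp.mpr (by linarith)
    _ = Q := mul_one Q

lemma core_energy (hc : c ^ 2 < 8) (hab : a ≤ b)
    (H : ∀ r ∈ Icc a b, HasDerivAt γ (vf c (γ r)) r ∧ 0 < (γ r).1) :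
    Efun γ b ≤ Efun γ a * exp (kk c * π) ∧ Efun γ a * exp (-(kk c * π)) ≤ Efun γ b := by
  have ha : a ∈ Icc a b := ⟨le_refl a, hab⟩
  have hb : b ∈ Icc a b := ⟨hab, le_refl b⟩
  have hk0 : 0 ≤ kk c := kk_nonneg hc
  have hAa1 := Afun_lt γ a
  have hAa2 := lt_Afun γ a
  have hAb1 := Afun_lt γ b
  have hAb2 := lt_Afun γ b
  have hU := anti_EU hc H ha hb hab
  have hL := mono_EL hc H ha hb hab
  simp only [] at hU hL
  constructor
  · apply le_mul_exp_of_exp_pair hU (Efun_nonneg γ a)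
    have : Afun γ b - Afun γ a ≤ π := by linarith
    nlinarith [mul_le_mul_of_nonneg_left this hk0]
  · apply le_of_exp_pair hL (Efun_nonneg γ b)
    have : Afun γ b - Afun γ a ≤ π := by linarith
    nlinarith [mul_le_mul_of_nonneg_left this hk0]

lemma core_y2 (hc : c ^ 2 < 8) (hab : a ≤ b)
    (H : ∀ r ∈ Icc a b, HasDerivAt γ (vf c (γ r)) r ∧ 0 < (γ r).1)
    (hy : ∀ r ∈ Icc a b, (γ r).2 ≤ 0) :
    ((γ a).2) ^ 2 * exp (-(kk c * π)) ≤ ((γ b).2) ^ 2 := by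
  have ha : a ∈ Icc a b := ⟨le_refl a, hab⟩
  have hb : b ∈ Icc a b := ⟨hab, le_refl b⟩
  have hk0 : 0 ≤ kk c := kk_nonneg hc
  have hAa1 := Afun_lt γ a
  have hAb1 := Afun_lt γ b
  have hAa2 := lt_Afun γ a
  have hAb2 := lt_Afun γ b
  have hY := mono_Y2 hc H hy ha hb hab
  simp only [] at hY
  apply le_of_exp_pair hY (sq_nonneg _)
  have : Afun γ b - Afun γ a ≤ π := by linarith
  nlinarith [mul_le_mul_of_nonneg_left this hk0]

lemma core_A (hc : c ^ 2 < 8) {ρ : ℝ} (hab : a ≤ b)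
    (H : ∀ r ∈ Icc a b, HasDerivAt γ (vf c (γ r)) r ∧ 0 < (γ r).1)
    (hρ : ∀ r ∈ Icc a b, ρ ≤ (γ r).1) :
    dd c * ρ * (b - a) ≤ π := by
  have ha : a ∈ Icc a b := ⟨le_refl a, hab⟩
  have hb : b ∈ Icc a b := ⟨hab, le_refl b⟩
  have hA := mono_Alin hc H hρ ha hb hab
  simp only [] at hA
  have hAa1 := Afun_lt γ a
  have hAa2 := lt_Afun γ a
  have hAb1 := Afun_lt γ b
  have hAb2 := lt_Afun γ b
  nlinarith [hA]

end core
end QL2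

namespace QL3
open QL QL2

/-- pointwise energy -/
def Ept (p : ℝ × ℝ) : ℝ := p.2 ^ 2 / 2 + p.1 ^ 4 / 4 + p.1 ^ 6 / 6

lemma Efun_eq (γ : ℝ → ℝ × ℝ) (s : ℝ) : Efun γ s = Ept (γ s) := rfl

lemma norm_le_of_Ept {M : ℝ} (hM : 0 ≤ M) (p : ℝ × ℝ) (h : Ept p ≤ M) :
    ‖p‖ ≤ 4 * M + 1 := by
  unfold Ept at h
  rw [norm_pair]
  have h1 : p.1 ^ 4 ≤ 4 * M := by nlinarith [sq_nonneg p.2, pow_le_pow_left₀ (abs_nonneg p.1) (le_refl |p.1|) 2, sq_nonneg (p.1 ^ 3)]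
  have h2 : p.2 ^ 2 ≤ 2 * M := by nlinarith [sq_nonneg (p.1 ^ 2), sq_nonneg (p.1 ^ 3)]
  have hb1 : |p.1| ≤ 4 * M + 1 := by
    rcases le_total |p.1| 1 with h' | h'
    · linarith
    · have : |p.1| ≤ |p.1| ^ 4 := by
        have h5 : |p.1| ^ 1 ≤ |p.1| ^ 4 := pow_le_pow_right₀ h' (by norm_num)
        simpa using h5
      have h4 : |p.1| ^ 4 = p.1 ^ 4 := by
        rw [← abs_pow]
        exact abs_of_nonneg (by positivity)
      linarith [h4 ▸ this]
  have hb2 : |p.2| ≤ 4 * M + 1 := by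
    rcases le_total |p.2| 1 with h' | h'
    · linarith
    · have : |p.2| ≤ |p.2| ^ 2 := by
        have h5 : |p.2| ^ 1 ≤ |p.2| ^ 2 := pow_le_pow_right₀ h' (by norm_num)
        simpa using h5
      have h4 : |p.2| ^ 2 = p.2 ^ 2 := sq_abs p.2
      linarith [h4 ▸ this]
  exact max_le hb1 hb2

/-- Energy two-sided bound on an interval where `x > 0` in the interior. -/
lemma EB {c : ℝ} (hc : c ^ 2 < 8) {γ : ℝ → ℝ × ℝ} {t : ℝ} (ht : 0 ≤ t)
    (hgen : ∀ s ∈ Icc 0 t, HasDerivAt γ (vf c (γ s)) s)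
    (hxpos : ∀ s ∈ Ioo 0 t, 0 < (γ s).1) :
    ∀ s ∈ Icc 0 t, Efun γ 0 * exp (-(kk c * π)) ≤ Efun γ s ∧
      Efun γ s ≤ Efun γ 0 * exp (kk c * π) := by
  have hk0 : 0 ≤ kk c := kk_nonneg hc
  have hkπ : 0 ≤ kk c * π := mul_nonneg hk0 pi_pos.le
  have hE00 : 0 ≤ Efun γ 0 := Efun_nonneg γ 0
  have hEcont : ∀ s ∈ Icc 0 t, ContinuousAt (Efun γ) s := fun s hs =>
    (hasDerivAt_E (hgen s hs)).continuousAt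
  -- the endpoint `s = 0`
  have h0 : Efun γ 0 * exp (-(kk c * π)) ≤ Efun γ 0 ∧
      Efun γ 0 ≤ Efun γ 0 * exp (kk c * π) := by
    constructor
    · have : exp (-(kk c * π)) ≤ 1 := by
        rw [← Real.exp_zero]
        exact exp_le_exp.mpr (by linarith)
      nlinarith
    · have : (1 : ℝ) ≤ exp (kk c * π) := by
        rw [← Real.exp_zero]
        exact exp_le_exp.mpr (by linarith)
      nlinarith
  -- interior points
  have hmid : ∀ s ∈ Ioo 0 t, Efun γ 0 * exp (-(kk c * π)) ≤ Efun γ s ∧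
      Efun γ s ≤ Efun γ 0 * exp (kk c * π) := by
    intro s hs
    have hcore : ∀ s₁ ∈ Ioc 0 s, Efun γ s ≤ Efun γ s₁ * exp (kk c * π) ∧
        Efun γ s₁ * exp (-(kk c * π)) ≤ Efun γ s := by
      intro s₁ hs₁
      have H : ∀ r ∈ Icc s₁ s, HasDerivAt γ (vf c (γ r)) r ∧ 0 < (γ r).1 := by
        intro r hr
        have hr0 : 0 < r := lt_of_lt_of_le hs₁.1 hr.1
        have hrt : r < t := lt_of_le_of_lt hr.2 hs.2
        exact ⟨hgen r ⟨hr0.le, hrt.le⟩, hxpos r ⟨hr0, hrt⟩⟩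
      exact core_energy hc hs₁.2 H
    have hmem : Ioc 0 s ∈ 𝓝[>] (0 : ℝ) := Ioc_mem_nhdsGT_of_mem ⟨le_refl 0, hs.1⟩
    have htend0 : Tendsto (Efun γ) (𝓝[>] (0 : ℝ)) (𝓝 (Efun γ 0)) :=
      ((hEcont 0 ⟨le_refl 0, ht⟩).tendsto).mono_left nhdsWithin_le_nhds
    constructor
    · have htend : Tendsto (fun s₁ => Efun γ s₁ * exp (-(kk c * π))) (𝓝[>] (0 : ℝ))
          (𝓝 (Efun γ 0 * exp (-(kk c * π)))) := htend0.mul tendsto_const_nhds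
      apply le_of_tendsto htend
      filter_upwards [hmem] with s₁ hs₁
      exact (hcore s₁ hs₁).2
    · have htend : Tendsto (fun s₁ => Efun γ s₁ * exp (kk c * π)) (𝓝[>] (0 : ℝ))
          (𝓝 (Efun γ 0 * exp (kk c * π))) := htend0.mul tendsto_const_nhds
      apply ge_of_tendsto htend
      filter_upwards [hmem] with s₁ hs₁
      exact (hcore s₁ hs₁).1
  -- now all points
  intro s hs
  rcases eq_or_lt_of_le hs.1 with h0s | h0s
  · rw [← h0s]; exact h0
  rcases eq_or_lt_of_le hs.2 with hst | hst
  · -- s = t, take limits from the left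
    subst hst
    have htendT : Tendsto (Efun γ) (𝓝[<] s) (𝓝 (Efun γ s)) :=
      ((hEcont s hs).tendsto).mono_left nhdsWithin_le_nhds
    have hmem : Ioo 0 s ∈ 𝓝[<] s := Ioo_mem_nhdsLT_of_mem ⟨h0s, le_refl s⟩
    constructor
    · apply ge_of_tendsto htendT
      filter_upwards [hmem] with s' hs'
      exact (hmid s' hs').1
    · apply le_of_tendsto htendT
      filter_upwards [hmem] with s' hs'
      exact (hmid s' hs').2
  · exact hmid s ⟨h0s, hst⟩

end QL3

namespace QL3
open QL QL2

/-- Trapping: while `x > 0` on `(0,t)`, the truncated solution stays in the ball where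
the truncated field coincides with the true field, and solves the true equation. -/
lemma keyBnd {c : ℝ} (hc : c ^ 2 < 8) {γ : ℝ → ℝ × ℝ} {Rc M : ℝ}
    (hγd : ∀ s, HasDerivAt γ (wf c Rc (γ s)) s)
    (hM : Efun γ 0 * exp (kk c * π) ≤ M)
    (hRc : 4 * M + 3 ≤ Rc)
    {t : ℝ} (ht : 0 ≤ t) (hxpos : ∀ s ∈ Ioo 0 t, 0 < (γ s).1) :
    ∀ s ∈ Icc 0 t, ‖γ s‖ ≤ 4 * M + 2 ∧ HasDerivAt γ (vf c (γ s)) s := by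
  have hk0 : 0 ≤ kk c := kk_nonneg hc
  have hkπ : 0 ≤ kk c * π := mul_nonneg hk0 pi_pos.le
  have hE00 : 0 ≤ Efun γ 0 := Efun_nonneg γ 0
  have hexp1 : (1 : ℝ) ≤ exp (kk c * π) := by
    rw [← Real.exp_zero]; exact exp_le_exp.mpr hkπ
  have hM0 : 0 ≤ M := le_trans (by nlinarith) hM
  have hγc : Continuous γ := continuous_iff_continuousAt.mpr fun s => (hγd s).continuousAt
  have hq : Ept (γ 0) ≤ M := by
    rw [← Efun_eq]
    nlinarith
  have hqn : ‖γ 0‖ ≤ 4 * M + 1 := norm_le_of_Ept hM0 _ hq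
  set S := {τ : ℝ | τ ∈ Icc 0 t ∧ ∀ s ∈ Icc 0 τ, ‖γ s‖ ≤ 4 * M + 2} with hS
  have hS0 : (0 : ℝ) ∈ S := by
    refine ⟨⟨le_refl 0, ht⟩, ?_⟩
    intro s hs
    have : s = 0 := le_antisymm hs.2 hs.1
    rw [this]; linarith
  have hSb : BddAbove S := ⟨t, fun τ hτ => hτ.1.2⟩
  set τ' := sSup S with hτ'
  have hτ1 : 0 ≤ τ' := le_csSup hSb hS0
  have hτ2 : τ' ≤ t := csSup_le ⟨0, hS0⟩ fun τ hτ => hτ.1.2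
  have hball : ∀ s ∈ Icc 0 τ', ‖γ s‖ ≤ 4 * M + 2 := by
    have hlt : ∀ s, 0 ≤ s → s < τ' → ‖γ s‖ ≤ 4 * M + 2 := by
      intro s hs0 hsτ
      obtain ⟨τ'', hτ''S, hsτ''⟩ := exists_lt_of_lt_csSup ⟨0, hS0⟩ hsτ
      exact hτ''S.2 s ⟨hs0, hsτ''.le⟩
    intro s hs
    rcases eq_or_lt_of_le hs.2 with heq | hlt'
    · rcases eq_or_lt_of_le hs.1 with h0 | h0
      · rw [← h0]; linarith
      · have hcn : Tendsto (fun r => ‖γ r‖) (𝓝[<] s) (𝓝 ‖γ s‖) :=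
          ((hγc.norm).tendsto s).mono_left nhdsWithin_le_nhds
        apply le_of_tendsto hcn
        filter_upwards [Ioo_mem_nhdsLT_of_mem (show s ∈ Ioc 0 s from ⟨h0, le_refl s⟩)]
          with r hr
        exact hlt r hr.1.le (heq ▸ hr.2)
    · exact hlt s hs.1 hlt'
  have hgenτ : ∀ s ∈ Icc 0 τ', HasDerivAt γ (vf c (γ s)) s := by
    intro s hs
    have := hγd s
    rwa [wf_eq (le_trans (hball s hs) (by linarith))] at this
  have himp : ∀ s ∈ Icc 0 τ', ‖γ s‖ ≤ 4 * M + 1 := by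
    intro s hs
    have hEb := (EB hc hτ1 hgenτ
      (fun r hr => hxpos r ⟨hr.1, lt_of_lt_of_le hr.2 hτ2⟩) s hs).2
    apply norm_le_of_Ept hM0
    rw [← Efun_eq]
    nlinarith
  have hτt : τ' = t := by
    by_contra hne
    have hτlt : τ' < t := lt_of_le_of_ne hτ2 hne
    have hτn : ‖γ τ'‖ ≤ 4 * M + 1 := himp τ' ⟨hτ1, le_refl τ'⟩
    have hev : ∀ᶠ s in 𝓝 τ', ‖γ s‖ < 4 * M + 2 :=
      ((hγc.norm).tendsto τ').eventually (eventually_lt_nhds (by linarith))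
    obtain ⟨ε, hε, hev'⟩ := Metric.eventually_nhds_iff.mp hev
    set τ'' := min t (τ' + ε / 2) with hτ''
    have hττ : τ' < τ'' := lt_min hτlt (by linarith)
    have hτ''S : τ'' ∈ S := by
      refine ⟨⟨by linarith, min_le_left _ _⟩, ?_⟩
      intro s hs
      rcases le_or_gt s τ' with h | h
      · exact hball s ⟨hs.1, h⟩
      · apply le_of_lt
        apply hev'
        rw [Real.dist_eq, abs_of_pos (by linarith)]
        have : s ≤ τ' + ε / 2 := le_trans hs.2 (min_le_right _ _)
        linarith
    have := le_csSup hSb hτ''S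
    linarith
  intro s hs
  rw [← hτt] at hs
  exact ⟨hball s hs, hgenτ s hs⟩

end QL3

namespace QL3
open QL QL2

/-- Half-orbit lemma: from a point on the positive `x` side (or on the positive `y`-axis),
the forward orbit crosses the negative `y`-axis transversally in finite time,
staying in `x > 0` in between. -/
lemma hol {c : ℝ} (hc : c ^ 2 < 8) (q : ℝ × ℝ) (hq : 0 < q.1 ∨ (q.1 = 0 ∧ 0 < q.2)) :
    ∃ (T : ℝ) (ρ : ℝ → ℝ × ℝ) (w : ℝ × ℝ → ℝ × ℝ) (K : ℝ≥0) (RR : ℝ),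
      0 < T ∧ ρ 0 = q ∧ LipschitzWith K w ∧ (∀ t, HasDerivAt ρ (w (ρ t)) t) ∧
      (∀ z : ℝ × ℝ, ‖z‖ ≤ RR → w z = vf c z) ∧ (∀ t ∈ Icc 0 T, ‖ρ t‖ ≤ RR) ∧
      (∀ t ∈ Ioo 0 T, 0 < (ρ t).1) ∧ (ρ T).1 = 0 ∧ (ρ T).2 < 0 := by
  have hδ := dd_pos hc
  have hk0 : 0 ≤ kk c := kk_nonneg hc
  have hkπ : 0 ≤ kk c * π := mul_nonneg hk0 pi_pos.le
  have hexp1 : (1 : ℝ) ≤ exp (kk c * π) := by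
    rw [← Real.exp_zero]; exact exp_le_exp.mpr hkπ
  set E0 := Ept q with hE0def
  have hE0pos : 0 < E0 := by
    rw [hE0def]; unfold Ept
    rcases hq with h | ⟨h1, h2⟩
    · have : 0 < q.1 ^ 4 := by positivity
      nlinarith [sq_nonneg q.2, pow_pos h 6]
    · have : 0 < q.2 ^ 2 := by positivity
      rw [h1]; norm_num; nlinarith
  set M := E0 * exp (kk c * π) with hMdef
  have hM0 : 0 < M := by positivity
  set Rc := 4 * M + 3 with hRcdef
  have hRc0 : (0 : ℝ) ≤ Rc := by linarith
  obtain ⟨K, hK⟩ := exists_lipschitz_wf c Rc hRc0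
  obtain ⟨C, hC⟩ := exists_bound_wf c Rc hRc0
  obtain ⟨γ, hγ0, hγd⟩ := exists_global_solution hK hC q
  have hγc : Continuous γ := continuous_iff_continuousAt.mpr fun s => (hγd s).continuousAt
  have hE00 : Efun γ 0 = E0 := by rw [Efun_eq, hγ0]
  have hMe : Efun γ 0 * exp (kk c * π) ≤ M := by rw [hE00]
  have hRcle : 4 * M + 3 ≤ Rc := le_refl _
  -- the solution cannot stay in x > 0 forever
  have hCC : ¬ ∀ s : ℝ, 0 < s → 0 < (γ s).1 := by
    intro hall
    have hbnd : ∀ t : ℝ, 0 ≤ t → ∀ s ∈ Icc 0 t,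
        ‖γ s‖ ≤ 4 * M + 2 ∧ HasDerivAt γ (vf c (γ s)) s :=
      fun t ht => keyBnd hc hγd hMe hRcle ht (fun s hs => hall s hs.1)
    have hgen : ∀ s : ℝ, 0 ≤ s → HasDerivAt γ (vf c (γ s)) s :=
      fun s hs => (hbnd s hs s ⟨hs, le_refl s⟩).2
    -- step 1 : y becomes negative
    have hstep1 : ∃ τ, 1 ≤ τ ∧ (γ τ).2 < 0 := by
      by_contra hyp
      push_neg at hyp
      have hymono : ∀ N, 1 ≤ N → ∀ s ∈ Icc 1 N, (γ 1).1 ≤ (γ s).1 := by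
        intro N hN
        have hm : MonotoneOn (fun s => (γ s).1) (Icc 1 N) := by
          apply monoOn'
          intro r hr
          refine ⟨(γ r).2, hasDerivAt_X (hgen r (by linarith [hr.1])), hyp r hr.1⟩
        intro s hs
        exact hm ⟨le_refl 1, hN⟩ hs hs.1
      set ρ1 := (γ 1).1 with hρ1def
      have hρ1 : 0 < ρ1 := hall 1 one_pos
      set N := 1 + (π + 1) / (dd c * ρ1) with hNdef
      have hden : 0 < dd c * ρ1 := by positivity
      have hN1 : (1 : ℝ) ≤ N := by
        rw [hNdef]
        have : 0 < (π + 1) / (dd c * ρ1) := by positivity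
        linarith
      have hsoj : dd c * ρ1 * (N - 1) ≤ π := by
        apply core_A hc hN1
        · intro r hr
          exact ⟨hgen r (by linarith [hr.1]), hall r (by linarith [hr.1])⟩
        · exact hymono N hN1
      rw [hNdef] at hsoj
      rw [add_sub_cancel_left] at hsoj
      rw [mul_div_cancel₀ _ (ne_of_gt hden)] at hsoj
      linarith
    obtain ⟨τ₁, hτ₁1, hyτ₁⟩ := hstep1
    have hτ₁0 : 0 < τ₁ := by linarith
    -- step 2 : y stays negative
    have hyneg : ∀ s, τ₁ ≤ s → (γ s).2 < 0 := by
      by_contra hyp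
      push_neg at hyp
      obtain ⟨s₂, hs₂, hy₂⟩ := hyp
      set Z := {s : ℝ | τ₁ ≤ s ∧ 0 ≤ (γ s).2} with hZdef
      have hZne : Z.Nonempty := ⟨s₂, hs₂, hy₂⟩
      have hZc : IsClosed Z := by
        apply IsClosed.inter
        · exact isClosed_le continuous_const continuous_id
        · exact isClosed_le continuous_const hγc.snd
      have hZb : BddBelow Z := ⟨τ₁, fun z hz => hz.1⟩
      set ζ := sInf Z with hζdef
      have hζZ : ζ ∈ Z := hZc.csInf_mem hZne hZb
      have hζτ : τ₁ ≤ ζ := hζZ.1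
      have hζne : τ₁ ≠ ζ := by
        intro h
        rw [← h] at hζZ
        linarith [hζZ.2]
      have hζlt : τ₁ < ζ := lt_of_le_of_ne hζτ hζne
      have hbelow : ∀ s ∈ Ico τ₁ ζ, (γ s).2 < 0 := by
        intro s hs
        by_contra h
        push_neg at h
        have : ζ ≤ s := csInf_le hZb ⟨hs.1, h⟩
        linarith [hs.2]
      have hyζ : (γ ζ).2 = 0 := by
        apply le_antisymm _ hζZ.2
        have hcn : Tendsto (fun r => (γ r).2) (𝓝[<] ζ) (𝓝 ((γ ζ).2)) :=
          ((hγc.snd).tendsto ζ).mono_left nhdsWithin_le_nhds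
        apply le_of_tendsto hcn
        filter_upwards [Ico_mem_nhdsLT_of_mem (show ζ ∈ Ioc τ₁ ζ from ⟨hζlt, le_refl ζ⟩)]
          with r hr
        exact (hbelow r hr).le
      have hxζ : 0 < (γ ζ).1 := hall ζ (by linarith)
      have hdY := hasDerivAt_Y (hgen ζ (by linarith))
      have hdval : -(((γ ζ).1) ^ 3 + ((γ ζ).1) ^ 5) - c * (γ ζ).1 * (γ ζ).2 < 0 := by
        rw [hyζ]
        have : 0 < ((γ ζ).1) ^ 3 + ((γ ζ).1) ^ 5 := by positivity
        nlinarith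
      have hevpos := eventually_pos_left hdY hdval hyζ
      have hevmem : Ico τ₁ ζ ∈ 𝓝[<] ζ :=
        Ico_mem_nhdsLT_of_mem (show ζ ∈ Ioc τ₁ ζ from ⟨hζlt, le_refl ζ⟩)
      obtain ⟨r, hr1, hr2⟩ := (hevpos.and (eventually_of_mem hevmem fun r hr => hr)).exists
      exact absurd hr1 (not_lt.mpr (hbelow r hr2).le)
    -- step 3 : quantitative bound on y
    set m2 := ((γ τ₁).2) ^ 2 * exp (-(kk c * π)) with hm2def
    have hm2 : 0 < m2 := by
      rw [hm2def]
      have : (γ τ₁).2 ≠ 0 := ne_of_lt hyτ₁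
      positivity
    set m := Real.sqrt m2 with hmdef
    have hm : 0 < m := Real.sqrt_pos.mpr hm2
    have hym : ∀ s, τ₁ ≤ s → (γ s).2 ≤ -m := by
      intro s hs
      have h1 : m2 ≤ ((γ s).2) ^ 2 := by
        rw [hm2def]
        apply core_y2 hc hs
        · intro r hr
          exact ⟨hgen r (by linarith [hr.1]), hall r (by linarith [hr.1])⟩
        · intro r hr
          exact (hyneg r hr.1).le
      have h2 : m ≤ |(γ s).2| := by
        rw [hmdef, ← Real.sqrt_sq_eq_abs]
        exact Real.sqrt_le_sqrt h1
      have h3 : (γ s).2 < 0 := hyneg s hs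
      rw [abs_of_neg h3] at h2
      linarith
    -- step 4 : x hits zero, contradiction
    set s3 := τ₁ + ((γ τ₁).1 + 1) / m with hs3def
    have hs3 : τ₁ ≤ s3 := by
      rw [hs3def]
      have h1 : 0 < (γ τ₁).1 := hall τ₁ hτ₁0
      have : 0 < ((γ τ₁).1 + 1) / m := by positivity
      linarith
    have hanti : AntitoneOn (fun s => (γ s).1 + m * s) (Icc τ₁ s3) := by
      apply antitoneOn'
      intro r hr
      refine ⟨(γ r).2 + m * 1, ?_, ?_⟩
      · exact (hasDerivAt_X (hgen r (by linarith [hr.1]))).add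
          ((hasDerivAt_id r).const_mul m)
      · linarith [hym r hr.1]
    have hfin := hanti ⟨le_refl τ₁, hs3⟩ ⟨hs3, le_refl s3⟩ hs3
    simp only [] at hfin
    have hxs3 : 0 < (γ s3).1 := hall s3 (by linarith)
    have hms3 : m * s3 = m * τ₁ + ((γ τ₁).1 + 1) := by
      rw [hs3def, mul_add, mul_div_cancel₀ _ (ne_of_gt hm)]
    rw [hms3] at hfin
    linarith
  -- initial entry into x > 0
  have hqball : ‖γ 0‖ ≤ Rc := by
    apply le_trans (norm_le_of_Ept hM0.le _ _) (by linarith)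
    rw [← Efun_eq, hE00, hMdef]
    nlinarith
  have hgen0 : HasDerivAt γ (vf c (γ 0)) 0 := by
    have := hγd 0
    rwa [wf_eq hqball] at this
  have hIE : ∃ ε > (0 : ℝ), ∀ s ∈ Ioc 0 ε, 0 < (γ s).1 := by
    rcases hq with hq1 | ⟨hq1, hq2⟩
    · have hcx : Tendsto (fun s => (γ s).1) (𝓝 0) (𝓝 ((γ 0).1)) := (hγc.fst).tendsto 0
      have hev : ∀ᶠ s in 𝓝 (0 : ℝ), 0 < (γ s).1 := by
        apply hcx.eventually
        apply eventually_gt_nhds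
        rw [hγ0]; exact hq1
      obtain ⟨ε, hε, hev'⟩ := Metric.eventually_nhds_iff.mp hev
      refine ⟨ε / 2, by linarith, fun s hs => ?_⟩
      apply hev'
      rw [Real.dist_eq, sub_zero, abs_of_pos hs.1]
      linarith [hs.2]
    · have hdX := hasDerivAt_X hgen0
      have hx00 : (γ 0).1 = 0 := by rw [hγ0]; exact hq1
      have hy00 : 0 < (γ 0).2 := by rw [hγ0]; exact hq2
      have hev := eventually_pos_right hdX hy00 hx00
      rw [eventually_nhdsWithin_iff] at hev
      obtain ⟨ε, hε, hev'⟩ := Metric.eventually_nhds_iff.mp hev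
      refine ⟨ε / 2, by linarith, fun s hs => ?_⟩
      apply hev'
      · rw [Real.dist_eq, sub_zero, abs_of_pos hs.1]
        linarith [hs.2]
      · exact hs.1
  obtain ⟨ε, hε, hIOC⟩ := hIE
  -- hitting time
  obtain ⟨s₀, hs₀pos, hs₀⟩ : ∃ s : ℝ, 0 < s ∧ (γ s).1 ≤ 0 := by
    by_contra h
    push_neg at h
    exact hCC fun s hs => h s hs
  set Z := {s : ℝ | ε ≤ s ∧ (γ s).1 ≤ 0} with hZdef
  have hZne : Z.Nonempty := by
    refine ⟨s₀, ?_, hs₀⟩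
    by_contra h
    push_neg at h
    exact absurd hs₀ (not_le.mpr (hIOC s₀ ⟨hs₀pos, h.le⟩))
  have hZc : IsClosed Z := by
    apply IsClosed.inter
    · exact isClosed_le continuous_const continuous_id
    · exact isClosed_le hγc.fst continuous_const
  have hZb : BddBelow Z := ⟨ε, fun z hz => hz.1⟩
  set T := sInf Z with hTdef
  have hTZ : T ∈ Z := hZc.csInf_mem hZne hZb
  have hTε : ε ≤ T := hTZ.1
  have hT0 : 0 < T := lt_of_lt_of_le hε hTε
  have hxpos : ∀ s ∈ Ioo 0 T, 0 < (γ s).1 := by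
    intro s hs
    rcases le_or_gt s ε with h | h
    · exact hIOC s ⟨hs.1, h⟩
    · by_contra hcon
      push_neg at hcon
      have : T ≤ s := csInf_le hZb ⟨h.le, hcon⟩
      linarith [hs.2]
  have hKB := keyBnd hc hγd hMe hRcle hT0.le hxpos
  have hgenT : ∀ s ∈ Icc 0 T, HasDerivAt γ (vf c (γ s)) s := fun s hs => (hKB s hs).2
  have hxT : (γ T).1 = 0 := by
    apply le_antisymm hTZ.2
    have hcn : Tendsto (fun r => (γ r).1) (𝓝[<] T) (𝓝 ((γ T).1)) :=
      ((hγc.fst).tendsto T).mono_left nhdsWithin_le_nhds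
    apply ge_of_tendsto hcn
    filter_upwards [Ioo_mem_nhdsLT_of_mem (show T ∈ Ioc 0 T from ⟨hT0, le_refl T⟩)]
      with r hr
    exact (hxpos r hr).le
  have hET := (EB hc hT0.le hgenT hxpos T ⟨hT0.le, le_refl T⟩).1
  have hyT : (γ T).2 < 0 := by
    have hyTne : (γ T).2 ≠ 0 := by
      intro h
      have : Efun γ T = 0 := by
        rw [Efun_eq]
        unfold Ept
        rw [hxT, h]
        norm_num
      rw [this, hE00] at hET
      nlinarith [exp_pos (-(kk c * π)), mul_pos hE0pos (exp_pos (-(kk c * π)))]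
    rcases lt_or_gt_of_ne hyTne with h | h
    · exact h
    · exfalso
      have hdX := hasDerivAt_X (hgenT T ⟨hT0.le, le_refl T⟩)
      have hev := eventually_neg_left hdX h hxT
      have hevmem : Ioo 0 T ∈ 𝓝[<] T :=
        Ioo_mem_nhdsLT_of_mem (show T ∈ Ioc 0 T from ⟨hT0, le_refl T⟩)
      obtain ⟨r, hr1, hr2⟩ := (hev.and (eventually_of_mem hevmem fun r hr => hr)).exists
      exact absurd hr1 (not_lt.mpr (hxpos r hr2).le)
  exact ⟨T, γ, wf c Rc, K, 4 * M + 2, hT0, hγ0, hK, hγd,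
    (fun z hz => wf_eq (by linarith)), (fun s hs => (hKB s hs).1), hxpos, hxT, hyT⟩

end QL3

namespace QL4
open QL QL2 QL3

/-- composition with a shift. -/
lemma shift_sol {F : ℝ × ℝ → ℝ × ℝ} {ρ : ℝ → ℝ × ℝ} {b t : ℝ}
    (h : HasDerivAt ρ (F (ρ (t + b))) (t + b)) :
    HasDerivAt (fun s => ρ (s + b)) (F (ρ (t + b))) t := by
  have hi : HasDerivAt (fun s : ℝ => s + b) 1 t := (hasDerivAt_id t).add_const b
  have h2 := h.scomp t hi
  rw [one_smul] at h2
  exact h2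

/-- reflection-reversal symmetry `(x,y,t) ↦ (-x,y,2T-t)`. -/
lemma reflect_sol {c T : ℝ} {ρ : ℝ → ℝ × ℝ} {t : ℝ}
    (h : HasDerivAt ρ (vf c (ρ (2 * T - t))) (2 * T - t)) :
    HasDerivAt (fun s => (-(ρ (2 * T - s)).1, (ρ (2 * T - s)).2))
      (vf c (-(ρ (2 * T - t)).1, (ρ (2 * T - t)).2)) t := by
  have hi : HasDerivAt (fun s : ℝ => 2 * T - s) (-1) t := (hasDerivAt_id t).const_sub (2 * T)
  have hcomp : HasDerivAt (fun s => ρ (2 * T - s)) ((-1 : ℝ) • vf c (ρ (2 * T - t))) t :=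
    h.scomp t hi
  have h1 := (hasDerivAt_fst hcomp).neg
  have h2 := hasDerivAt_snd hcomp
  have h3 := h1.prodMk h2
  refine h3.congr_deriv ?_
  simp only [vf, Prod.smul_fst, Prod.smul_snd, smul_eq_mul, Prod.mk.injEq]
  constructor <;> ring

/-- negation symmetry `(x,y) ↦ (-x,-y)` maps the `c`-system to the `-c`-system. -/
lemma neg_sol {c : ℝ} {ρ : ℝ → ℝ × ℝ} {t : ℝ}
    (h : HasDerivAt ρ (vf c (ρ t)) t) :
    HasDerivAt (fun s => (-(ρ s).1, -(ρ s).2))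
      (vf (-c) (-(ρ t).1, -(ρ t).2)) t := by
  have h1 := (hasDerivAt_fst h).neg
  have h2 := (hasDerivAt_snd h).neg
  have h3 := h1.prodMk h2
  refine h3.congr_deriv ?_
  simp only [vf, Prod.mk.injEq, true_and]
  ring

/-- time-reversal + `y`-flip maps the `c`-system to the `-c`-system. -/
lemma revflip_sol {c : ℝ} {ρ : ℝ → ℝ × ℝ} {t : ℝ}
    (h : HasDerivAt ρ (vf c (ρ (-t))) (-t)) :
    HasDerivAt (fun s => ((ρ (-s)).1, -(ρ (-s)).2))
      (vf (-c) ((ρ (-t)).1, -(ρ (-t)).2)) t := by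
  have hi : HasDerivAt (fun s : ℝ => -s) (-1) t := by
    exact (hasDerivAt_id t).neg
  have hcomp : HasDerivAt (fun s => ρ (-s)) ((-1 : ℝ) • vf c (ρ (-t))) t :=
    h.scomp t hi
  have h1 := hasDerivAt_fst hcomp
  have h2 := (hasDerivAt_snd hcomp).neg
  have h3 := h1.prodMk h2
  refine h3.congr_deriv ?_
  simp only [vf, Prod.smul_fst, Prod.smul_snd, smul_eq_mul, Prod.mk.injEq]
  constructor <;> ring

/-- uniqueness for a globally Lipschitz field, two global solutions equal at `0`. -/
lemma uniq_global {w : ℝ × ℝ → ℝ × ℝ} {K : ℝ≥0} (hK : LipschitzWith K w)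
    {γ₁ γ₂ : ℝ → ℝ × ℝ}
    (h₁ : ∀ t, HasDerivAt γ₁ (w (γ₁ t)) t) (h₂ : ∀ t, HasDerivAt γ₂ (w (γ₂ t)) t)
    (heq : γ₁ 0 = γ₂ 0) : ∀ t, γ₁ t = γ₂ t := by
  intro t
  have habs : |t| ≤ |t| := le_refl _
  have h0 : (0 : ℝ) ∈ Ioo (-(|t| + 1)) (|t| + 1) := by
    constructor <;> [linarith [abs_nonneg t]; linarith [abs_nonneg t]]
  have key : EqOn γ₁ γ₂ (Icc (-(|t| + 1)) (|t| + 1)) := by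
    apply ODE_solution_unique_of_mem_Icc (v := fun _ p => w p)
      (s := fun _ => (univ : Set (ℝ × ℝ))) (K := K)
      (fun _ _ => hK.lipschitzOnWith) h0
    · exact fun r _ => (h₁ r).continuousAt.continuousWithinAt
    · exact fun r _ => h₁ r
    · exact fun r _ => mem_univ _
    · exact fun r _ => (h₂ r).continuousAt.continuousWithinAt
    · exact fun r _ => h₂ r
    · exact fun r _ => mem_univ _
    · exact heq
  apply key
  rw [mem_Icc]
  rw [abs_le] at habs
  constructor <;> linarith [habs.1, habs.2, abs_nonneg t]

/-- uniqueness for the true (locally Lipschitz) field on a compact interval,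
both solutions two-sided differentiable on the interval, equal at the left endpoint. -/
lemma uniq_Icc {c : ℝ} {γ₁ γ₂ : ℝ → ℝ × ℝ} {a b : ℝ}
    (h₁ : ∀ t ∈ Icc a b, HasDerivAt γ₁ (vf c (γ₁ t)) t)
    (h₂ : ∀ t ∈ Icc a b, HasDerivAt γ₂ (vf c (γ₂ t)) t)
    (heq : γ₁ a = γ₂ a) : EqOn γ₁ γ₂ (Icc a b) := by
  rcases le_or_gt a b with hab | hab
  · have hc₁ : ContinuousOn γ₁ (Icc a b) := fun t ht => (h₁ t ht).continuousAt.continuousWithinAt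
    have hc₂ : ContinuousOn γ₂ (Icc a b) := fun t ht => (h₂ t ht).continuousAt.continuousWithinAt
    obtain ⟨r₁, hr₁⟩ := (isCompact_Icc (a := a) (b := b)).exists_bound_of_continuousOn hc₁
    obtain ⟨r₂, hr₂⟩ := (isCompact_Icc (a := a) (b := b)).exists_bound_of_continuousOn hc₂
    set r := max r₁ r₂ with hr
    obtain ⟨L, hL⟩ := exists_lipschitzOnWith_vf c r
    apply ODE_solution_unique_of_mem_Icc_right (v := fun _ p => vf c p)
      (s := fun _ => closedBall (0 : ℝ × ℝ) r) (K := L) (fun _ _ => hL) hc₁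
      (fun t ht => (h₁ t (Ico_subset_Icc_self ht)).hasDerivWithinAt)
      (fun t ht => by
        rw [mem_closedBall, dist_zero_right]
        exact le_trans (hr₁ t (Ico_subset_Icc_self ht)) (le_max_left _ _)) hc₂
      (fun t ht => (h₂ t (Ico_subset_Icc_self ht)).hasDerivWithinAt)
      (fun t ht => by
        rw [mem_closedBall, dist_zero_right]
        exact le_trans (hr₂ t (Ico_subset_Icc_self ht)) (le_max_right _ _)) heq
  · intro t ht
    exact absurd (le_trans ht.1 ht.2) (not_le.mpr hab)

end QL4

namespace QL4
open QL QL2 QL3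

/-- Closed orbit through `(0, a)`, `a > 0`. -/
lemma orb3 {c : ℝ} (hc : c ^ 2 < 8) {a : ℝ} (ha : 0 < a) :
    ∃ Tp > (0 : ℝ), ∃ γ : ℝ → ℝ × ℝ, (∀ t, HasDerivAt γ (vf c (γ t)) t) ∧
      γ 0 = (0, a) ∧ (∀ t, γ (t + Tp) = γ t) ∧ (∃ t, γ t ≠ γ 0) := by
  obtain ⟨T, ρ, w, K, RR, hT0, hρ0, hK, hρd, hwe, hρball, hxpos, hxT, hyT⟩ :=
    hol hc (0, a) (Or.inr ⟨rfl, ha⟩)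
  have hgen : ∀ t ∈ Icc 0 T, HasDerivAt ρ (vf c (ρ t)) t := by
    intro t ht
    have := hρd t
    rwa [hwe _ (hρball t ht)] at this
  set δ : ℝ → ℝ × ℝ := fun s => (-(ρ (2 * T - s)).1, (ρ (2 * T - s)).2) with hδdef
  have hmem2 : ∀ t ∈ Icc T (2 * T), 2 * T - t ∈ Icc 0 T := by
    intro t ht
    exact ⟨by linarith [ht.2], by linarith [ht.1]⟩
  have hδgen : ∀ t ∈ Icc T (2 * T), HasDerivAt δ (vf c (δ t)) t := by
    intro t ht
    exact reflect_sol (hgen _ (hmem2 t ht))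
  have hnormδ : ∀ t ∈ Icc T (2 * T), ‖δ t‖ ≤ RR := by
    intro t ht
    have h1 := hρball _ (hmem2 t ht)
    rw [norm_pair] at h1 ⊢
    simp only [hδdef]
    rwa [abs_neg]
  have hδw : ∀ t ∈ Icc T (2 * T), HasDerivAt δ (w (δ t)) t := by
    intro t ht
    rw [hwe _ (hnormδ t ht)]
    exact hδgen t ht
  have hδT : ρ T = δ T := by
    simp only [hδdef]
    rw [show 2 * T - T = T by ring]
    have : -(ρ T).1 = (ρ T).1 := by rw [hxT]; ring
    rw [this]
  have hEqOn : EqOn ρ δ (Icc T (2 * T)) := by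
    apply ODE_solution_unique (v := fun _ p => w p) (K := K) (fun _ => hK)
    · exact fun t ht => (hρd t).continuousAt.continuousWithinAt
    · exact fun t ht => (hρd t).hasDerivWithinAt
    · exact fun t ht => (hδw t ht).continuousAt.continuousWithinAt
    · exact fun t ht => (hδw t (Ico_subset_Icc_self ht)).hasDerivWithinAt
    · exact hδT
  have hρ2T : ρ (2 * T) = (0, a) := by
    have h1 := hEqOn ⟨by linarith, le_refl _⟩
    rw [h1]
    simp only [hδdef]
    rw [show 2 * T - 2 * T = 0 by ring, hρ0]
    norm_num
  -- periodicity
  have hshift : ∀ t, HasDerivAt (fun s => ρ (s + 2 * T)) (w ((fun s => ρ (s + 2 * T)) t)) t := by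
    intro t
    exact shift_sol (hρd (t + 2 * T))
  have hper : ∀ t, ρ (t + 2 * T) = ρ t := by
    apply uniq_global hK hshift hρd
    simp only [zero_add]
    rw [hρ2T, hρ0]
  have hperiodic : Function.Periodic ρ (2 * T) := hper
  have hballAll : ∀ t, ‖ρ t‖ ≤ RR := by
    intro t
    obtain ⟨s, hs, heqv⟩ := hperiodic.exists_mem_Ico₀ (by linarith) t
    rw [heqv]
    rcases le_or_gt s T with h | h
    · exact hρball s ⟨hs.1, h⟩
    · rw [hEqOn ⟨h.le, hs.2.le⟩]
      exact hnormδ s ⟨h.le, hs.2.le⟩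
  have hgenAll : ∀ t, HasDerivAt ρ (vf c (ρ t)) t := by
    intro t
    have := hρd t
    rwa [hwe _ (hballAll t)] at this
  refine ⟨2 * T, by linarith, ρ, hgenAll, hρ0, hper, ⟨T / 2, ?_⟩⟩
  have hx2 : 0 < (ρ (T / 2)).1 := hxpos (T / 2) ⟨by linarith, by linarith⟩
  intro hcon
  rw [hρ0] at hcon
  rw [hcon] at hx2
  norm_num at hx2

/-- Closed orbit through any `p` with `p.1 > 0`. -/
lemma orb1 {c : ℝ} (hc : c ^ 2 < 8) {p : ℝ × ℝ} (hp : 0 < p.1) :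
    ∃ Tp > (0 : ℝ), ∃ γ : ℝ → ℝ × ℝ, (∀ t, HasDerivAt γ (vf c (γ t)) t) ∧
      γ 0 = p ∧ (∀ t, γ (t + Tp) = γ t) ∧ (∃ t, γ t ≠ γ 0) := by
  have hc' : (-c) ^ 2 < 8 := by rwa [neg_pow, show ((-1:ℝ))^2 = 1 by norm_num, one_mul]
  -- backward half-orbit via the reversed system
  obtain ⟨Tm, σ, w', K', RR', hTm0, hσ0, hK', hσd, hwe', hσball, hxpos', hxT', hyT'⟩ :=
    hol hc' (p.1, -p.2) (Or.inl hp)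
  have hσgen : ∀ t ∈ Icc 0 Tm, HasDerivAt σ (vf (-c) (σ t)) t := by
    intro t ht
    have := hσd t
    rwa [hwe' _ (hσball t ht)] at this
  -- transform back:  τ t = ((σ (-t)).1, -(σ (-t)).2) solves the c-system on [-Tm, 0]
  set τ : ℝ → ℝ × ℝ := fun t => ((σ (-t)).1, -(σ (-t)).2) with hτdef
  have hτgen : ∀ t ∈ Icc (-Tm) 0, HasDerivAt τ (vf c (τ t)) t := by
    intro t ht
    have hmem : -t ∈ Icc 0 Tm := ⟨by linarith [ht.2], by linarith [ht.1]⟩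
    have := revflip_sol (c := -c) (hσgen _ hmem)
    rwa [neg_neg] at this
  set a := -(σ Tm).2 with hadef
  have ha : 0 < a := by rw [hadef]; linarith
  have hτstart : τ (-Tm) = (0, a) := by
    simp only [hτdef, neg_neg]
    rw [hxT']
  have hτend : τ 0 = p := by
    simp only [hτdef, neg_zero]
    rw [hσ0]
    simp
  -- the closed orbit through (0, a)
  obtain ⟨Tp, hTp, γa, hγagen, hγa0, hγaper, t₀, hγanc⟩ := orb3 hc ha
  -- μ is the backward arc, shifted to start at 0
  set μ : ℝ → ℝ × ℝ := fun t => τ (t - Tm) with hμdef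
  have hμgen : ∀ t ∈ Icc 0 Tm, HasDerivAt μ (vf c (μ t)) t := by
    intro t ht
    have hmem : t + -Tm ∈ Icc (-Tm) 0 := ⟨by linarith [ht.1], by linarith [ht.2]⟩
    have h2 := shift_sol (F := vf c) (b := -Tm) (ρ := τ) (t := t) (hτgen _ hmem)
    simp only [hμdef]
    convert h2 using 2 <;> ring
  have hμ0 : μ 0 = (0, a) := by
    simp only [hμdef, zero_sub]
    exact hτstart
  have hγaTm : γa Tm = p := by
    have hEq := uniq_Icc (a := 0) (b := Tm)
      (fun t ht => hγagen t) hμgen (by rw [hγa0, hμ0])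
    have h1 := hEq ⟨hTm0.le, le_refl _⟩
    rw [h1]
    simp only [hμdef, sub_self]
    exact hτend
  refine ⟨Tp, hTp, fun t => γa (t + Tm), ?_, ?_, ?_, ?_⟩
  · intro t
    exact shift_sol (F := vf c) (hγagen (t + Tm))
  · show γa (0 + Tm) = p
    rw [zero_add, hγaTm]
  · intro t
    show γa (t + Tp + Tm) = γa (t + Tm)
    rw [show t + Tp + Tm = t + Tm + Tp by ring, hγaper]
  · refine ⟨-Tm, ?_⟩
    show γa (-Tm + Tm) ≠ γa (0 + Tm)
    rw [neg_add_cancel, zero_add, hγa0, hγaTm]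
    intro hcon
    rw [← hcon] at hp
    norm_num at hp

end QL4

namespace QL4
open QL QL2 QL3

lemma negorb {c : ℝ} {γ' : ℝ → ℝ × ℝ} (hgen' : ∀ t, HasDerivAt γ' (vf (-c) (γ' t)) t) :
    ∀ t, HasDerivAt (fun s => (-(γ' s).1, -(γ' s).2))
      (vf c ((-(γ' t).1, -(γ' t).2))) t := by
  intro t
  have h := neg_sol (c := -c) (hgen' t)
  rwa [neg_neg] at h

/-- Main orbit existence: through every nonzero point there is a nonconstant periodic orbit. -/
lemma main_orbit {c : ℝ} (hc : c ^ 2 < 8) (q : ℝ × ℝ) (hq : q ≠ (0, 0)) :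
    ∃ T > (0 : ℝ), ∃ γ : ℝ → ℝ × ℝ, (∀ t, HasDerivAt γ (vf c (γ t)) t) ∧
      γ 0 = q ∧ (∀ t, γ (t + T) = γ t) ∧ (∃ t, γ t ≠ γ 0) := by
  have hc' : (-c) ^ 2 < 8 := by rwa [neg_sq]
  rcases lt_trichotomy q.1 0 with h1 | h1 | h1
  · -- x < 0 : reflect the orbit of the reversed system
    obtain ⟨T, hT, γ', hgen', hγ'0, hper', t₀, hnc'⟩ :=
      orb1 hc' (p := (-q.1, -q.2)) (by simpa using h1)
    refine ⟨T, hT, fun s => (-(γ' s).1, -(γ' s).2), negorb hgen', ?_, ?_, ⟨t₀, ?_⟩⟩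
    · show (-(γ' 0).1, -(γ' 0).2) = q
      rw [hγ'0]
      simp
    · intro t
      show (-(γ' (t + T)).1, -(γ' (t + T)).2) = (-(γ' t).1, -(γ' t).2)
      rw [hper' t]
    · show (-(γ' t₀).1, -(γ' t₀).2) ≠ (-(γ' 0).1, -(γ' 0).2)
      intro hcon
      apply hnc'
      rw [Prod.mk.injEq, neg_inj, neg_inj] at hcon
      exact Prod.ext hcon.1 hcon.2
  · rcases lt_trichotomy q.2 0 with h2 | h2 | h2
    · -- on the negative y-axis
      obtain ⟨T, hT, γ', hgen', hγ'0, hper', t₀, hnc'⟩ := orb3 hc' (a := -q.2) (by linarith)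
      refine ⟨T, hT, fun s => (-(γ' s).1, -(γ' s).2), negorb hgen', ?_, ?_, ⟨t₀, ?_⟩⟩
      · show (-(γ' 0).1, -(γ' 0).2) = q
        rw [hγ'0]
        simp only [neg_zero, neg_neg]
        exact Prod.ext h1.symm rfl
      · intro t
        show (-(γ' (t + T)).1, -(γ' (t + T)).2) = (-(γ' t).1, -(γ' t).2)
        rw [hper' t]
      · show (-(γ' t₀).1, -(γ' t₀).2) ≠ (-(γ' 0).1, -(γ' 0).2)
        intro hcon
        apply hnc'
        rw [Prod.mk.injEq, neg_inj, neg_inj] at hcon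
        exact Prod.ext hcon.1 hcon.2
    · exact absurd (Prod.ext h1 h2) hq
    · -- on the positive y-axis
      obtain ⟨T, hT, γ, hgen, hγ0, hper, hnc⟩ := orb3 hc (a := q.2) h2
      refine ⟨T, hT, γ, hgen, ?_, hper, hnc⟩
      rw [hγ0]
      exact Prod.ext h1.symm rfl
  · obtain ⟨T, hT, γ, hgen, hγ0, hper, hnc⟩ := orb1 hc (p := q) h1
    exact ⟨T, hT, γ, hgen, hγ0, hper, hnc⟩

end QL4

theorem quintic_lienard_nilpotent_type_global_center
    (c : ℝ) (hc0 : 0 < |c|) (hc : |c| < 2 * Real.sqrt 2)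
    (g f : ℝ → ℝ)
    (hg : ∀ x : ℝ, g x = x ^ 3 + x ^ 5)
    (hf : ∀ x : ℝ, f x = c * x) :
    IsGlobalCenter g f ∧ f 0 = 0 ∧ deriv g 0 = 0 := by
  have hc8 : c ^ 2 < 8 := by
    have h1 : |c| * |c| < (2 * Real.sqrt 2) * (2 * Real.sqrt 2) :=
      mul_self_lt_mul_self (abs_nonneg c) hc
    have h2 : (2 * Real.sqrt 2) * (2 * Real.sqrt 2) = 8 := by
      rw [show (2 * Real.sqrt 2) * (2 * Real.sqrt 2) = 4 * (Real.sqrt 2 * Real.sqrt 2) by ring,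
        Real.mul_self_sqrt (by norm_num)]
      norm_num
    have h3 : c ^ 2 = |c| * |c| := by rw [abs_mul_abs_self]; ring
    rw [h2] at h1
    linarith
  refine ⟨⟨by rw [hg]; norm_num, ?_⟩, by rw [hf]; ring, ?_⟩
  · intro p hp
    obtain ⟨T, hT, γ, hgen, hγ0, hper, t₀, hnc⟩ := QL4.main_orbit hc8 p hp
    refine ⟨T, hT, γ, ?_, hγ0, hper, ?_⟩
    · intro t
      constructor
      · exact QL.hasDerivAt_fst (hgen t)
      · have h2 := QL.hasDerivAt_snd (hgen t)
        have heq : -(g ((γ t).1)) - f ((γ t).1) * (γ t).2 = (QL.vf c (γ t)).2 := by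
          rw [hg, hf]
          simp only [QL.vf]
          try ring
        rw [heq]
        exact h2
    · intro hall
      apply hnc
      rw [hall t₀, hall 0]
  · have hgfun : g = fun x => x ^ 3 + x ^ 5 := funext hg
    rw [hgfun]
    have hD : HasDerivAt (fun x : ℝ => x ^ 3 + x ^ 5) 0 0 := by
      have h := (hasDerivAt_pow 3 (0 : ℝ)).add (hasDerivAt_pow 5 (0 : ℝ))
      refine h.congr_deriv ?_
      norm_num
    exact hD.deriv
end
end

section
/- Assume conditions (i) and (iii) hold for the generalized polynomial Liénard system (1), and assume condition (iv) fails. Then there exists K ≥ 0 such that either F(x₁) < F(x₂) for all x₁ < 0 < x₂ with G(x₁) = G(x₂) > K, or F(x₁) > F(x₂) for all x₁ < 0 < x₂ with G(x₁) = G(x₂) > K. -/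
open Filter Topology intervalIntegral

open Filter Topology

/-- Analytic implicit function theorem in two real variables. -/
lemma analytic_implicit_fn (Φ : ℝ × ℝ → ℝ) (u₀ z₀ c : ℝ)
    (hΦ : AnalyticAt ℝ Φ (u₀, z₀)) (h0 : Φ (u₀, z₀) = 0)
    (hd : HasDerivAt (fun z => Φ (u₀, z)) c z₀) (hc : c ≠ 0) :
    ∃ y : ℝ → ℝ, AnalyticAt ℝ y u₀ ∧ y u₀ = z₀ ∧ ∀ᶠ u in 𝓝 u₀, Φ (u, y u) = 0 := by
  classical
  set D : ℝ × ℝ →L[ℝ] ℝ := fderiv ℝ Φ (u₀, z₀) with hD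
  have hDc : D (0, 1) = c := by
    have hline : HasDerivAt (fun z : ℝ => ((u₀, z) : ℝ × ℝ)) (0, 1) z₀ :=
      (hasDerivAt_const z₀ u₀).prodMk (hasDerivAt_id z₀)
    have hcomp : HasDerivAt (fun z => Φ (u₀, z)) (D (0, 1)) z₀ :=
      (hΦ.differentiableAt.hasFDerivAt.comp_hasDerivAt z₀ hline)
    exact hcomp.unique hd
  have hDrep : ∀ v : ℝ × ℝ, D v = v.1 * D (1, 0) + v.2 * D (0, 1) := by
    intro v
    have : v = v.1 • ((1 : ℝ), (0 : ℝ)) + v.2 • ((0 : ℝ), (1 : ℝ)) := by ext <;> simp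
    rw [this, map_add, map_smul, map_smul]
    simp [smul_eq_mul]
  set α : ℝ := D (1, 0) with hα
  set fL : ℝ × ℝ →L[ℝ] ℝ × ℝ := (ContinuousLinearMap.fst ℝ ℝ ℝ).prod D with hfL
  set gL : ℝ × ℝ →L[ℝ] ℝ × ℝ := (ContinuousLinearMap.fst ℝ ℝ ℝ).prod
    (c⁻¹ • (ContinuousLinearMap.snd ℝ ℝ ℝ - α • ContinuousLinearMap.fst ℝ ℝ ℝ)) with hgL
  have hleft : Function.LeftInverse gL fL := by
    intro v
    simp only [hfL, hgL, ContinuousLinearMap.prod_apply, ContinuousLinearMap.coe_fst',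
      ContinuousLinearMap.smul_apply, ContinuousLinearMap.sub_apply,
      ContinuousLinearMap.coe_snd', ContinuousLinearMap.coe_smul']
    have hv := hDrep v
    rw [hDc] at hv
    ext
    · rfl
    · simp only [hv, smul_eq_mul]
      field_simp
      ring
  have hright : Function.RightInverse gL fL := by
    intro v
    simp only [hfL, hgL, ContinuousLinearMap.prod_apply, ContinuousLinearMap.coe_fst',
      ContinuousLinearMap.smul_apply, ContinuousLinearMap.sub_apply,
      ContinuousLinearMap.coe_snd', ContinuousLinearMap.coe_smul']
    rw [hDrep ((v.1, c⁻¹ • (v.2 - α • v.1)) : ℝ × ℝ), hDc]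
    ext
    · rfl
    · simp only [smul_eq_mul]
      field_simp
      ring
  set L : (ℝ × ℝ) ≃L[ℝ] (ℝ × ℝ) := ContinuousLinearEquiv.equivOfInverse fL gL hleft hright with hL
  set T : ℝ × ℝ → ℝ × ℝ := fun p => (p.1, Φ p) with hT
  have hTanal : AnalyticAt ℝ T (u₀, z₀) := analyticAt_fst.prod hΦ
  have hTd : HasStrictFDerivAt T (L : (ℝ × ℝ) →L[ℝ] (ℝ × ℝ)) (u₀, z₀) := by
    have h1 : HasStrictFDerivAt T fL (u₀, z₀) :=
      (ContinuousLinearMap.fst ℝ ℝ ℝ).hasStrictFDerivAt.prodMk hΦ.hasStrictFDerivAt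
    have : (L : (ℝ × ℝ) →L[ℝ] (ℝ × ℝ)) = fL := by ext v <;> rfl
    rwa [this]
  set PH : OpenPartialHomeomorph (ℝ × ℝ) (ℝ × ℝ) := hTd.toOpenPartialHomeomorph T with hPH
  have hmem : (u₀, z₀) ∈ PH.source := hTd.mem_toOpenPartialHomeomorph_source
  obtain ⟨p, hp⟩ := hTanal
  have hp' : HasFPowerSeriesAt (⇑PH) p (u₀, z₀) := by
    rwa [show (⇑PH) = T from hTd.toOpenPartialHomeomorph_coe]
  have hp1 : p 1 = (continuousMultilinearCurryFin1 ℝ (ℝ × ℝ) (ℝ × ℝ)).symm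
      (L : (ℝ × ℝ) →L[ℝ] (ℝ × ℝ)) := by
    have h1 := hp.fderiv_eq
    have h2 : fderiv ℝ T (u₀, z₀) = (L : (ℝ × ℝ) →L[ℝ] (ℝ × ℝ)) := hTd.hasFDerivAt.fderiv
    rw [h2] at h1
    have h3 : (continuousMultilinearCurryFin1 ℝ (ℝ × ℝ) (ℝ × ℝ)) (p 1) = (L : (ℝ × ℝ) →L[ℝ] (ℝ × ℝ)) := h1.symm
    have h4 : p 1 = (continuousMultilinearCurryFin1 ℝ (ℝ × ℝ) (ℝ × ℝ)).symm
        ((continuousMultilinearCurryFin1 ℝ (ℝ × ℝ) (ℝ × ℝ)) (p 1)) :=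
      ((continuousMultilinearCurryFin1 ℝ (ℝ × ℝ) (ℝ × ℝ)).symm_apply_apply (p 1)).symm
    rw [h4, h3]
  have hsymm : HasFPowerSeriesAt (⇑PH.symm) (p.leftInv L (u₀, z₀)) (PH (u₀, z₀)) :=
    PH.hasFPowerSeriesAt_symm hmem hp' hp1
  have hPHval : PH (u₀, z₀) = (u₀, 0) := by
    show T (u₀, z₀) = (u₀, 0)
    rw [hT]; simp [h0]
  rw [hPHval] at hsymm
  have hsymm_anal : AnalyticAt ℝ (⇑PH.symm) (u₀, 0) := ⟨_, hsymm⟩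
  refine ⟨fun u => (PH.symm (u, 0)).2, ?_, ?_, ?_⟩
  · have ha1 : AnalyticAt ℝ (fun u : ℝ => ((u, (0:ℝ)) : ℝ × ℝ)) u₀ :=
      analyticAt_id.prod analyticAt_const
    have ha2 : AnalyticAt ℝ (⇑PH.symm ∘ fun u : ℝ => ((u, (0:ℝ)) : ℝ × ℝ)) u₀ :=
      AnalyticAt.comp (g := ⇑PH.symm) (f := fun u : ℝ => ((u, (0:ℝ)) : ℝ × ℝ)) (x := u₀)
        hsymm_anal ha1
    have ha3 : AnalyticAt ℝ (Prod.snd ∘ ⇑PH.symm ∘ fun u : ℝ => ((u, (0:ℝ)) : ℝ × ℝ)) u₀ :=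
      analyticAt_snd.comp ha2
    exact ha3
  · show (PH.symm (u₀, 0)).2 = z₀
    have : PH.symm (u₀, 0) = (u₀, z₀) := by rw [← hPHval]; exact PH.left_inv hmem
    rw [this]
  · have htarget : ∀ᶠ u : ℝ in 𝓝 u₀, ((u, (0:ℝ)) : ℝ × ℝ) ∈ PH.target := by
      have hopen : IsOpen PH.target := PH.open_target
      have hmem' : ((u₀, (0:ℝ)) : ℝ × ℝ) ∈ PH.target := by
        rw [← hPHval]; exact PH.map_source hmem
      have hcont : ContinuousAt (fun u : ℝ => ((u, (0:ℝ)) : ℝ × ℝ)) u₀ := by fun_prop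
      exact hcont (hopen.mem_nhds hmem')
    filter_upwards [htarget] with u hu
    have h1 : PH (PH.symm (u, 0)) = (u, 0) := PH.right_inv hu
    have h2 : T (PH.symm (u, 0)) = (u, 0) := by
      rw [← hTd.toOpenPartialHomeomorph_coe]; exact h1
    rw [hT] at h2
    have hfst : (PH.symm (u, 0)).1 = u := congrArg Prod.fst h2
    have hsnd : Φ (PH.symm (u, 0)) = 0 := congrArg Prod.snd h2
    have heq : ((u, (PH.symm (u,0)).2) : ℝ × ℝ) = PH.symm (u, 0) :=
      Prod.ext_iff.mpr ⟨hfst.symm, rfl⟩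
    rw [heq]
    exact hsnd

open Filter Topology intervalIntegral

lemma sum_pow_integral (lo hi : ℕ) (w : ℕ → ℝ) (x : ℝ) :
    (∫ t in (0:ℝ)..x, ∑ i ∈ Finset.Icc lo hi, w i * t ^ i)
      = ∑ i ∈ Finset.Icc lo hi, w i / (i + 1) * x ^ (i + 1) := by
  rw [intervalIntegral.integral_finset_sum]
  · refine Finset.sum_congr rfl fun i _ => ?_
    rw [intervalIntegral.integral_const_mul, integral_pow]
    have : ((i : ℝ) + 1) ≠ 0 := by positivity
    field_simp
    simp
  · intro i _
    exact (continuous_const.mul (continuous_pow i)).intervalIntegrable _ _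

lemma sum_pow_analyticAt (lo hi : ℕ) (w : ℕ → ℝ) (x : ℝ) :
    AnalyticAt ℝ (fun t : ℝ => ∑ i ∈ Finset.Icc lo hi, w i * t ^ (i + 1)) x := by
  refine Finset.analyticAt_fun_sum _ fun i _ => ?_
  exact analyticAt_const.mul (analyticAt_id.pow (i + 1))

lemma sum_pow_hasDerivAt (lo hi : ℕ) (w : ℕ → ℝ) (x : ℝ) :
    HasDerivAt (fun t : ℝ => ∑ i ∈ Finset.Icc lo hi, w i / (i + 1) * t ^ (i + 1))
      (∑ i ∈ Finset.Icc lo hi, w i * x ^ i) x := by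
  have h : ∀ i ∈ Finset.Icc lo hi,
      HasDerivAt (fun t : ℝ => w i / (i + 1) * t ^ (i + 1)) (w i * x ^ i) x := by
    intro i _
    have h1 : HasDerivAt (fun t : ℝ => t ^ (i + 1)) ((i + 1 : ℕ) * x ^ i) x := by
      simpa using hasDerivAt_pow (i + 1) x
    have h2 := h1.const_mul (w i / (i + 1))
    refine h2.congr_deriv ?_
    have : ((i : ℝ) + 1) ≠ 0 := by positivity
    push_cast
    field_simp
  exact HasDerivAt.fun_sum h

lemma sum_pow_tendsto_atTop (lo hi : ℕ) (w : ℕ → ℝ) (hw : 0 < w hi) (hlohi : lo ≤ hi) :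
    Tendsto (fun x : ℝ => ∑ i ∈ Finset.Icc lo hi, w i * x ^ (i + 1)) atTop atTop := by
  have hq : Tendsto (fun x : ℝ => ∑ i ∈ Finset.Icc lo hi, w i * (x⁻¹) ^ (hi - i))
      atTop (𝓝 (w hi)) := by
    have hval : (∑ i ∈ Finset.Icc lo hi, w i * (0:ℝ) ^ (hi - i)) = w hi := by
      rw [Finset.sum_eq_single hi]
      · simp
      · intro i hi' hne
        have : 0 < hi - i := by
          rw [Finset.mem_Icc] at hi'
          omega
        rw [zero_pow (by omega)]
        ring
      · intro h
        exact absurd (Finset.mem_Icc.mpr ⟨hlohi, le_rfl⟩) h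
    rw [← hval]
    refine tendsto_finset_sum _ fun i _ => ?_
    exact (tendsto_const_nhds.mul (tendsto_inv_atTop_zero.pow (hi - i)))
  have hpow : Tendsto (fun x : ℝ => x ^ (hi + 1)) atTop atTop :=
    tendsto_pow_atTop (Nat.succ_ne_zero hi)
  have hmul := hpow.atTop_mul_pos hw hq
  refine hmul.congr' ?_
  filter_upwards [eventually_gt_atTop (0:ℝ)] with x hx
  rw [Finset.mul_sum]
  refine Finset.sum_congr rfl fun i hi' => ?_
  rw [Finset.mem_Icc] at hi'
  have hxne : x ≠ 0 := ne_of_gt hx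
  have hsplit : x ^ (hi + 1) = x ^ (i + 1) * x ^ (hi - i) := by
    rw [← pow_add]
    congr 1
    omega
  rw [hsplit]
  have : x ^ (hi - i) * (x⁻¹) ^ (hi - i) = 1 := by
    rw [← mul_pow, mul_inv_cancel₀ hxne, one_pow]
  field_simp
  linear_combination w i * this

theorem lienard_iv_fails_eventual_sign
    (r m s n : ℕ) (a b : ℕ → ℝ)
    (hr : 1 ≤ r) (hrm : r ≤ m) (hsn : s ≤ n)
    (hcoef : a r * a m * b s * b n ≠ 0)
    (g f F G : ℝ → ℝ)
    (hg : ∀ x : ℝ, g x = ∑ i ∈ Finset.Icc r m, a i * x ^ i)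
    (hf : ∀ x : ℝ, f x = ∑ i ∈ Finset.Icc s n, b i * x ^ i)
    (hF : ∀ x : ℝ, F x = ∫ t in (0 : ℝ)..x, f t)
    (hG : ∀ x : ℝ, G x = ∫ t in (0 : ℝ)..x, g t)
    (hi : ∀ x : ℝ, x ≠ 0 → x * g x > 0)
    (hiii : (Odd m ∧ m > 2 * n + 1 ∧ a m > 0) ∨
            (m = 2 * n + 1 ∧ 4 * (n + 1 : ℝ) * a m / (b n) ^ 2 > 1))
    (hiv : ¬ (∀ x₁ x₂ : ℝ, x₁ < 0 → 0 < x₂ → G x₁ = G x₂ → F x₁ = F x₂)) :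
    ∃ K : ℝ, 0 ≤ K ∧
      ((∀ x₁ x₂ : ℝ, x₁ < 0 → 0 < x₂ → G x₁ = G x₂ → G x₂ > K → F x₁ < F x₂) ∨
       (∀ x₁ x₂ : ℝ, x₁ < 0 → 0 < x₂ → G x₁ = G x₂ → G x₂ > K → F x₁ > F x₂)) := by
  classical
  -- basic coefficient facts
  have ham : a m ≠ 0 := by intro h; apply hcoef; rw [h]; ring
  have hbn : b n ≠ 0 := by intro h; apply hcoef; rw [h]; ring
  have hmodd : Odd m := by
    rcases hiii with ⟨h1, _, _⟩ | ⟨h1, _⟩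
    · exact h1
    · exact ⟨n, by omega⟩
  have hampos : 0 < a m := by
    rcases hiii with ⟨_, _, h3⟩ | ⟨_, h2⟩
    · exact h3
    · have hb2 : 0 < b n ^ 2 := by positivity
      have h4 : (0:ℝ) < 4 * (n + 1) := by positivity
      have := (one_lt_div hb2).mp h2
      nlinarith
  -- explicit formulas
  have hGfun : G = fun x => ∑ i ∈ Finset.Icc r m, a i / (i + 1) * x ^ (i + 1) := by
    funext x
    rw [hG]
    rw [show (fun t : ℝ => g t) = fun t : ℝ => ∑ i ∈ Finset.Icc r m, a i * t ^ i from
      funext hg]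
    exact sum_pow_integral r m a x
  have hFfun : F = fun x => ∑ i ∈ Finset.Icc s n, b i / (i + 1) * x ^ (i + 1) := by
    funext x
    rw [hF]
    rw [show (fun t : ℝ => f t) = fun t : ℝ => ∑ i ∈ Finset.Icc s n, b i * t ^ i from
      funext hf]
    exact sum_pow_integral s n b x
  have hGd : ∀ x : ℝ, HasDerivAt G (g x) x := by
    intro x
    rw [hGfun, hg]
    exact sum_pow_hasDerivAt r m a x
  have hGanal : ∀ x : ℝ, AnalyticAt ℝ G x := by
    intro x; rw [hGfun]; exact sum_pow_analyticAt r m _ x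
  have hFanal : ∀ x : ℝ, AnalyticAt ℝ F x := by
    intro x; rw [hFfun]; exact sum_pow_analyticAt s n _ x
  have hG0 : G 0 = 0 := by
    rw [hGfun]
    refine Finset.sum_eq_zero fun i _ => by simp
  -- sign of g
  have hgpos : ∀ x : ℝ, 0 < x → 0 < g x := by
    intro x hx
    have := hi x (ne_of_gt hx)
    nlinarith
  have hgneg : ∀ x : ℝ, x < 0 → g x < 0 := by
    intro x hx
    have := hi x (ne_of_lt hx)
    nlinarith
  -- monotonicity
  have hGcont : Continuous G := by
    rw [hGfun]
    exact continuous_finset_sum _ fun i _ => continuous_const.mul (continuous_pow (i + 1))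
  have hGmono : StrictMonoOn G (Set.Ici 0) := by
    refine strictMonoOn_of_deriv_pos (convex_Ici 0) hGcont.continuousOn ?_
    intro x hx
    rw [interior_Ici] at hx
    rw [(hGd x).deriv]
    exact hgpos x hx
  have hGanti : StrictAntiOn G (Set.Iic 0) := by
    refine strictAntiOn_of_deriv_neg (convex_Iic 0) hGcont.continuousOn ?_
    intro x hx
    rw [interior_Iic] at hx
    rw [(hGd x).deriv]
    exact hgneg x hx
  have hGpos : ∀ x : ℝ, 0 < x → 0 < G x := by
    intro x hx
    have := hGmono (Set.self_mem_Ici) (Set.mem_Ici.mpr hx.le) hx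
    rwa [hG0] at this
  -- G(-t) → ∞
  have hGtends : Tendsto (fun t : ℝ => G (-t)) atTop atTop := by
    have hww : 0 < a m / (m + 1) * (-1 : ℝ) ^ (m + 1) := by
      rw [Even.neg_one_pow hmodd.add_one]
      have : (0:ℝ) < (m:ℝ) + 1 := by positivity
      positivity
    have := sum_pow_tendsto_atTop r m (fun i => a i / (i + 1) * (-1 : ℝ) ^ (i + 1)) hww hrm
    refine this.congr fun t => ?_
    rw [hGfun]
    refine Finset.sum_congr rfl fun i _ => ?_
    rw [neg_pow]
    ring
  -- existence and uniqueness of the conjugate point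
  have hexists : ∀ x : ℝ, 0 < x → ∃ z, z < 0 ∧ G z = G x := by
    intro x hx
    obtain ⟨T, hT1, hT2⟩ := ((hGtends.eventually_ge_atTop (G x)).and
      (eventually_gt_atTop (0:ℝ))).exists
    have hsub : Set.Icc (G 0) (G (-T)) ⊆ G '' Set.Icc (-T) 0 :=
      intermediate_value_Icc' (by linarith) hGcont.continuousOn
    have hmem : G x ∈ Set.Icc (G 0) (G (-T)) := by
      rw [hG0]
      exact ⟨(hGpos x hx).le, hT1⟩
    obtain ⟨z, hz1, hz2⟩ := hsub hmem
    refine ⟨z, ?_, hz2⟩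
    rcases lt_or_eq_of_le hz1.2 with h | h
    · exact h
    · exfalso
      rw [h, hG0] at hz2
      exact absurd hz2.symm (ne_of_gt (hGpos x hx))
  set φ : ℝ → ℝ := fun x => if hx : 0 < x then (hexists x hx).choose else -1 with hφdef
  have hφneg : ∀ x : ℝ, 0 < x → φ x < 0 := by
    intro x hx
    rw [hφdef]
    simp only [dif_pos hx]
    exact (hexists x hx).choose_spec.1
  have hφG : ∀ x : ℝ, 0 < x → G (φ x) = G x := by
    intro x hx
    rw [hφdef]
    simp only [dif_pos hx]
    exact (hexists x hx).choose_spec.2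
  have huniq : ∀ z x : ℝ, z < 0 → 0 < x → G z = G x → z = φ x := by
    intro z x hz hx hzx
    have h1 : G z = G (φ x) := by rw [hzx, hφG x hx]
    exact hGanti.injOn (Set.mem_Iic.mpr hz.le) (Set.mem_Iic.mpr (hφneg x hx).le) h1
  -- analyticity of φ on the positive axis
  have hφanal : ∀ x₀ : ℝ, 0 < x₀ → AnalyticAt ℝ φ x₀ := by
    intro x₀ hx₀
    set Φ : ℝ × ℝ → ℝ := fun p => G p.2 - G p.1 with hΦdef
    have hΦa : AnalyticAt ℝ Φ (x₀, φ x₀) := by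
      exact ((hGanal _).comp analyticAt_snd).sub ((hGanal _).comp analyticAt_fst)
    have h0 : Φ (x₀, φ x₀) = 0 := by
      simp only [hΦdef]
      rw [hφG x₀ hx₀]
      ring
    have hd : HasDerivAt (fun z => Φ (x₀, z)) (g (φ x₀)) (φ x₀) :=
      (hGd (φ x₀)).sub_const (G x₀)
    obtain ⟨y, hya, hy0, hyev⟩ := analytic_implicit_fn Φ x₀ (φ x₀) (g (φ x₀)) hΦa h0 hd
      (ne_of_lt (hgneg _ (hφneg x₀ hx₀)))
    refine hya.congr ?_
    have hev1 : ∀ᶠ x in 𝓝 x₀, y x < 0 := by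
      have := hya.continuousAt.preimage_mem_nhds (isOpen_Iio.mem_nhds
        (by rw [hy0]; exact hφneg x₀ hx₀ : y x₀ ∈ Set.Iio (0:ℝ)))
      filter_upwards [this] with x hx using hx
    have hev2 : ∀ᶠ x in 𝓝 x₀, 0 < x := eventually_gt_nhds hx₀
    filter_upwards [hyev, hev1, hev2] with x h1 h2 h3
    have hGyx : G (y x) = G x := by
      have : G (y x) - G x = 0 := h1
      linarith
    exact huniq (y x) x h2 h3 hGyx
  set Ψ : ℝ → ℝ := fun x => F x - F (φ x) with hΨdef
  have hΨanal : ∀ x : ℝ, 0 < x → AnalyticAt ℝ Ψ x := by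
    intro x hx
    exact (hFanal x).sub ((hFanal (φ x)).comp (hφanal x hx))
  -- the branch at infinity
  set Φi : ℝ × ℝ → ℝ :=
    fun p => ∑ i ∈ Finset.Icc r m, a i / (i + 1) * p.1 ^ (m - i) * ((-p.2) ^ (i + 1) - 1)
    with hΦidef
  have hΦia : AnalyticAt ℝ Φi ((0:ℝ), (1:ℝ)) := by
    refine Finset.analyticAt_fun_sum _ fun i _ => ?_
    exact (analyticAt_const.mul (analyticAt_fst.pow (m - i))).mul
      (((analyticAt_snd.neg).pow (i + 1)).sub analyticAt_const)
  have h0i : Φi (0, 1) = 0 := by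
    refine Finset.sum_eq_zero fun i hi' => ?_
    rw [Finset.mem_Icc] at hi'
    rcases eq_or_ne i m with h | h
    · subst h
      simp only [Nat.sub_self, pow_zero, mul_one]
      rw [Even.neg_one_pow hmodd.add_one]
      ring
    · rw [zero_pow (by omega : m - i ≠ 0)]
      ring
  have hdi : HasDerivAt (fun z => Φi (0, z)) (a m) 1 := by
    have hterm : ∀ i ∈ Finset.Icc r m,
        HasDerivAt (fun z : ℝ => a i / (i + 1) * (0:ℝ) ^ (m - i) * ((-z) ^ (i + 1) - 1))
          (a i / (i + 1) * (0:ℝ) ^ (m - i) * (((i:ℝ) + 1) * (-1) ^ i * (-1))) 1 := by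
      intro i _
      have h1 : HasDerivAt (fun z : ℝ => -z) (-1 : ℝ) 1 := (hasDerivAt_id 1).neg
      have h2 : HasDerivAt (fun z : ℝ => (-z) ^ (i + 1))
          (((i + 1 : ℕ) : ℝ) * (-(1:ℝ)) ^ (i + 1 - 1) * (-1)) 1 := h1.pow (i + 1)
      have h3 := (h2.sub_const 1).const_mul (a i / (i + 1) * (0:ℝ) ^ (m - i))
      refine h3.congr_deriv ?_
      push_cast [Nat.add_sub_cancel]
      try ring
    have hsum := HasDerivAt.fun_sum hterm
    have hval : (∑ i ∈ Finset.Icc r m,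
        a i / (i + 1) * (0:ℝ) ^ (m - i) * (((i:ℝ) + 1) * (-1) ^ i * (-1))) = a m := by
      rw [Finset.sum_eq_single m]
      · have hm1 : ((m:ℝ) + 1) ≠ 0 := by positivity
        rw [Nat.sub_self, pow_zero, Odd.neg_one_pow hmodd]
        field_simp
      · intro i hi' hne
        rw [Finset.mem_Icc] at hi'
        rw [zero_pow (by omega : m - i ≠ 0)]
        ring
      · intro h
        exact absurd (Finset.mem_Icc.mpr ⟨hrm, le_rfl⟩) h
    rw [hval] at hsum
    convert hsum using 2
  obtain ⟨y, hya, hy0, hyev⟩ := analytic_implicit_fn Φi 0 1 (a m) hΦia h0i hdi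
    (ne_of_gt hampos)
  -- algebraic identity
  have halg : ∀ u z : ℝ, u ≠ 0 → Φi (u, z) = u ^ (m + 1) * (G (-z / u) - G (1 / u)) := by
    intro u z hu
    rw [hGfun]
    simp only [hΦidef]
    rw [← Finset.sum_sub_distrib, Finset.mul_sum]
    refine Finset.sum_congr rfl fun i hi' => ?_
    rw [Finset.mem_Icc] at hi'
    have hpow : u ^ (m + 1) = u ^ (i + 1) * u ^ (m - i) := by
      rw [← pow_add]
      congr 1
      omega
    rw [div_pow, div_pow, hpow]
    have hupow : (u : ℝ) ^ (i + 1) ≠ 0 := pow_ne_zero _ hu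
    field_simp
    ring
  have hy0pos : ∀ᶠ u in 𝓝 (0:ℝ), 0 < y u := by
    have := hya.continuousAt.preimage_mem_nhds (isOpen_Ioi.mem_nhds
      (by rw [hy0]; norm_num : y 0 ∈ Set.Ioi (0:ℝ)))
    filter_upwards [this] with u hu using hu
  have halgF : ∀ u z : ℝ, u ≠ 0 →
      (∑ i ∈ Finset.Icc s n, b i / (i + 1) * u ^ (n - i) * (1 - (-z) ^ (i + 1)))
        = u ^ (n + 1) * (F (1 / u) - F (-z / u)) := by
    intro u z hu
    rw [hFfun]
    rw [← Finset.sum_sub_distrib, Finset.mul_sum]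
    refine Finset.sum_congr rfl fun i hi' => ?_
    rw [Finset.mem_Icc] at hi'
    have hpow : u ^ (n + 1) = u ^ (i + 1) * u ^ (n - i) := by
      rw [← pow_add]
      congr 1
      omega
    rw [div_pow, div_pow, hpow]
    have hupow : (u : ℝ) ^ (i + 1) ≠ 0 := pow_ne_zero _ hu
    field_simp
    ring
  set Hh : ℝ → ℝ :=
    fun u => ∑ i ∈ Finset.Icc s n, b i / (i + 1) * u ^ (n - i) * (1 - (-y u) ^ (i + 1))
    with hHhdef
  have hHha : AnalyticAt ℝ Hh 0 := by
    refine Finset.analyticAt_fun_sum _ fun i _ => ?_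
    exact (analyticAt_const.mul (analyticAt_id.pow (n - i))).mul
      (analyticAt_const.sub ((hya.neg).pow (i + 1)))
  have hrel : ∀ᶠ u in 𝓝 (0:ℝ), 0 < u →
      (φ (1 / u) = -(y u) / u ∧ Hh u = u ^ (n + 1) * Ψ (1 / u)) := by
    filter_upwards [hyev, hy0pos] with u h1 h2
    intro hu
    have hune : u ≠ 0 := ne_of_gt hu
    have hG2 : G (-(y u) / u) = G (1 / u) := by
      have h3 := halg u (y u) hune
      rw [h1] at h3
      have hup : (0:ℝ) < u ^ (m + 1) := pow_pos hu _
      have h4 : G (-(y u) / u) - G (1 / u) = 0 := by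
        rcases mul_eq_zero.mp h3.symm with h | h
        · exact absurd h (ne_of_gt hup)
        · exact h
      linarith
    have hneg : -(y u) / u < 0 := div_neg_of_neg_of_pos (neg_lt_zero.mpr h2) hu
    have hφ1u : φ (1 / u) = -(y u) / u :=
      (huniq _ _ hneg (one_div_pos.mpr hu) hG2).symm
    refine ⟨hφ1u, ?_⟩
    simp only [hHhdef, hΨdef]
    rw [halgF u (y u) hune, hφ1u]
  -- dichotomy for Hh at 0
  rcases hHha.eventually_eq_zero_or_eventually_ne_zero with hcase | hcase
  · -- Hh vanishes near 0 : then Ψ ≡ 0 on (0,∞), contradicting (iv) failing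
    exfalso
    obtain ⟨ε, hε, hP⟩ := Metric.eventually_nhds_iff.mp (hcase.and hrel)
    set M : ℝ := ε⁻¹ + 1 with hMdef
    have hεinv : 0 < ε⁻¹ := inv_pos.mpr hε
    have hM : 0 < M := by positivity
    have hzero : ∀ x : ℝ, M < x → Ψ x = 0 := by
      intro x hx
      have hx0 : 0 < x := lt_trans hM hx
      have h1 : ε⁻¹ < x := by rw [hMdef] at hx; linarith
      have hxe : x⁻¹ < ε := by
        have := one_div_lt_one_div_of_lt hεinv h1
        rwa [one_div, one_div, inv_inv] at this
      have hdist : dist x⁻¹ (0:ℝ) < ε := by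
        rw [Real.dist_eq, sub_zero, abs_of_pos (inv_pos.mpr hx0)]
        exact hxe
      obtain ⟨hh0, hrest⟩ := hP hdist
      obtain ⟨_, hrel2⟩ := hrest (inv_pos.mpr hx0)
      rw [hh0, one_div, inv_inv] at hrel2
      have hposp : (0:ℝ) < x⁻¹ ^ (n + 1) := pow_pos (inv_pos.mpr hx0) _
      rcases mul_eq_zero.mp hrel2.symm with hcc | hcc
      · exact absurd hcc (ne_of_gt hposp)
      · exact hcc
    have hΨ0 : Set.EqOn Ψ 0 (Set.Ioi 0) := by
      refine AnalyticOnNhd.eqOn_zero_of_preconnected_of_eventuallyEq_zero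
        (fun x hx => hΨanal x hx) isPreconnected_Ioi
        (Set.mem_Ioi.mpr (by linarith : (0:ℝ) < M + 1)) ?_
      filter_upwards [eventually_gt_nhds (by linarith : M < M + 1)] with x hx
      simpa using hzero x hx
    apply hiv
    intro x₁ x₂ h1 h2 h3
    have hx1 : x₁ = φ x₂ := huniq x₁ x₂ h1 h2 h3
    have hz := hΨ0 (Set.mem_Ioi.mpr h2)
    simp only [hΨdef, Pi.zero_apply] at hz
    rw [← hx1] at hz
    linarith
  · -- Hh is nonvanishing near 0 : Ψ has constant sign far out
    have hcase' : ∀ᶠ u in 𝓝 (0:ℝ), u ≠ 0 → Hh u ≠ 0 := by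
      rw [eventually_nhdsWithin_iff] at hcase
      filter_upwards [hcase] with u hu hu0
      exact hu (by simpa using hu0)
    obtain ⟨ε, hε, hP⟩ := Metric.eventually_nhds_iff.mp (hcase'.and hrel)
    set M : ℝ := ε⁻¹ + 1 with hMdef
    have hεinv : 0 < ε⁻¹ := inv_pos.mpr hε
    have hM : 0 < M := by positivity
    have hne : ∀ x : ℝ, M < x → Ψ x ≠ 0 := by
      intro x hx
      have hx0 : 0 < x := lt_trans hM hx
      have h1 : ε⁻¹ < x := by rw [hMdef] at hx; linarith
      have hxe : x⁻¹ < ε := by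
        have := one_div_lt_one_div_of_lt hεinv h1
        rwa [one_div, one_div, inv_inv] at this
      have hdist : dist x⁻¹ (0:ℝ) < ε := by
        rw [Real.dist_eq, sub_zero, abs_of_pos (inv_pos.mpr hx0)]
        exact hxe
      obtain ⟨hh0, hrest⟩ := hP hdist
      obtain ⟨_, hrel2⟩ := hrest (inv_pos.mpr hx0)
      rw [one_div, inv_inv] at hrel2
      intro hΨx
      rw [hΨx, mul_zero] at hrel2
      exact hh0 (ne_of_gt (inv_pos.mpr hx0)) hrel2
    have hIVT : ∀ p q : ℝ, M < p → M < q → Ψ p < 0 → 0 < Ψ q → False := by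
      intro p q hp hq hΨp hΨq
      have hconts : ContinuousOn Ψ (Set.uIcc p q) := by
        intro z hz
        have hzM : M < z := lt_of_lt_of_le (lt_min hp hq) hz.1
        exact (hΨanal z (lt_trans hM hzM)).continuousAt.continuousWithinAt
      have h0mem : (0:ℝ) ∈ Set.uIcc (Ψ p) (Ψ q) :=
        Set.mem_uIcc.mpr (Or.inl ⟨hΨp.le, hΨq.le⟩)
      obtain ⟨z, hz1, hz2⟩ := intermediate_value_uIcc hconts h0mem
      have hzM : M < z := lt_of_lt_of_le (lt_min hp hq) hz1.1
      exact hne z hzM hz2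
    have hsign : (∀ x : ℝ, M < x → 0 < Ψ x) ∨ (∀ x : ℝ, M < x → Ψ x < 0) := by
      rcases lt_trichotomy (Ψ (M + 1)) 0 with hc | hc | hc
      · right
        intro x hx
        rcases lt_trichotomy (Ψ x) 0 with h' | h' | h'
        · exact h'
        · exact absurd h' (hne x hx)
        · exact absurd (hIVT (M + 1) x (by linarith) hx hc h') (fun hh => hh)
      · exact absurd hc (hne (M + 1) (by linarith))
      · left
        intro x hx
        rcases lt_trichotomy (Ψ x) 0 with h' | h' | h'
        · exact absurd (hIVT x (M + 1) hx (by linarith) h' hc) (fun hh => hh)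
        · exact absurd h' (hne x hx)
        · exact h'
    have hKpos : 0 < G (M + 1) := hGpos (M + 1) (by linarith)
    have hx2big : ∀ x₂ : ℝ, 0 < x₂ → G x₂ > G (M + 1) → M < x₂ := by
      intro x₂ h2 h4
      by_contra hcon
      push_neg at hcon
      have : G x₂ ≤ G (M + 1) := by
        rcases lt_or_eq_of_le hcon with h' | h'
        · exact (hGmono (Set.mem_Ici.mpr h2.le)
            (Set.mem_Ici.mpr (by linarith)) (by linarith)).le
        · rw [h']
          exact (hGmono (Set.mem_Ici.mpr (by linarith))
            (Set.mem_Ici.mpr (by linarith)) (by linarith)).le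
      linarith
    refine ⟨G (M + 1), hKpos.le, ?_⟩
    rcases hsign with hs | hs
    · left
      intro x₁ x₂ h1 h2 h3 h4
      have hx2 : M < x₂ := hx2big x₂ h2 h4
      have hx1 : x₁ = φ x₂ := huniq x₁ x₂ h1 h2 h3
      have := hs x₂ hx2
      simp only [hΨdef] at this
      rw [← hx1] at this
      linarith
    · right
      intro x₁ x₂ h1 h2 h3 h4
      have hx2 : M < x₂ := hx2big x₂ h2 h4
      have hx1 : x₁ = φ x₂ := huniq x₁ x₂ h1 h2 h3
      have := hs x₂ hx2
      simp only [hΨdef] at this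
      rw [← hx1] at this
      linarith
end

section
/- Let g be a real polynomial with x·g(x) > 0 for all x ≠ 0, and G(x) = ∫₀ˣ g(ξ) dξ. Then for every x < 0 there exists a unique σ(x) > 0 with G(σ(x)) = G(x), and the resulting map σ : (-∞, 0) → (0, ∞) is strictly decreasing and real analytic, with σ(x) → 0 as x → 0⁻ and σ(x) → ∞ as x → -∞. -/
open Polynomial Set Filter Topology

lemma exists_antideriv (g : Polynomial ℝ) : ∃ P : Polynomial ℝ, P.derivative = g := by
  refine ⟨g.sum fun n a => C (a / (n+1)) * X^(n+1), ?_⟩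
  rw [Polynomial.sum_def, map_sum]
  conv_rhs => rw [← Polynomial.sum_C_mul_X_pow_eq g, Polynomial.sum_def]
  refine Finset.sum_congr rfl fun n _ => ?_
  rw [Polynomial.derivative_C_mul, Polynomial.derivative_X_pow, ← mul_assoc, ← C_mul]
  have : ((n+1 : ℕ) : ℝ) ≠ 0 := by positivity
  push_cast
  rw [div_mul_cancel₀ _ (by push_cast at this ⊢; exact this)]

theorem matching_map_sigma_properties
    (g : Polynomial ℝ)
    (hgpos : ∀ x : ℝ, x ≠ 0 → x * g.eval x > 0)
    (G : ℝ → ℝ)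
    (hG : ∀ x : ℝ, G x = ∫ t in (0 : ℝ)..x, g.eval t) :
    ∃ σ : ℝ → ℝ,
      (∀ x : ℝ, x < 0 → (σ x > 0 ∧ G (σ x) = G x ∧ ∀ y : ℝ, y > 0 → G y = G x → y = σ x)) ∧
      StrictAntiOn σ (Set.Iio 0) ∧
      AnalyticOnNhd ℝ σ (Set.Iio 0) ∧
      Filter.Tendsto σ (nhdsWithin 0 (Set.Iio 0)) (nhds 0) ∧
      Filter.Tendsto σ Filter.atBot Filter.atTop := by
  obtain ⟨P, hP⟩ := exists_antideriv g
  have hgne : g ≠ 0 := by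
    intro h
    have := hgpos 1 one_ne_zero
    simp [h] at this
  -- G equals the polynomial expression
  have hGF : G = fun x => P.eval x - P.eval 0 := by
    funext x
    rw [hG x]
    have hderiv : ∀ t ∈ Set.uIcc (0:ℝ) x, HasDerivAt (fun y => P.eval y) (g.eval t) t :=
      fun t _ => by simpa [hP] using P.hasDerivAt t
    rw [intervalIntegral.integral_eq_sub_of_hasDerivAt hderiv
      ((g.continuous).intervalIntegrable 0 x)]
  subst hGF
  clear hG
  set F : ℝ → ℝ := fun x => P.eval x - P.eval 0 with hFdef
  have hFc : Continuous F := (P.continuous_aeval).sub continuous_const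
  have hF0 : F 0 = 0 := by simp [hFdef]
  have hFd : ∀ x, HasDerivAt F (g.eval x) x := fun x => by
    simpa [hP, hFdef] using (P.hasDerivAt x).sub_const (P.eval 0)
  have hgpos' : ∀ x : ℝ, 0 < x → 0 < g.eval x := by
    intro x hx
    nlinarith [hgpos x hx.ne']
  have hgneg : ∀ x : ℝ, x < 0 → g.eval x < 0 := by
    intro x hx
    nlinarith [hgpos x hx.ne]
  have mono : StrictMonoOn F (Ici 0) := by
    refine strictMonoOn_of_deriv_pos (convex_Ici 0) hFc.continuousOn fun x hx => ?_
    rw [interior_Ici] at hx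
    rw [(hFd x).deriv]
    exact hgpos' x hx
  have anti : StrictAntiOn F (Iic 0) := by
    refine strictAntiOn_of_deriv_neg (convex_Iic 0) hFc.continuousOn fun x hx => ?_
    rw [interior_Iic] at hx
    rw [(hFd x).deriv]
    exact hgneg x hx
  have Fpos : ∀ x : ℝ, x ≠ 0 → 0 < F x := by
    intro x hx
    rcases hx.lt_or_gt with h | h
    · have := anti (mem_Iic.mpr h.le) (mem_Iic.mpr le_rfl) h
      rwa [hF0] at this
    · have := mono (mem_Ici.mpr le_rfl) h.le h
      rwa [hF0] at this
  have Fnonneg : ∀ x : ℝ, 0 ≤ F x := by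
    intro x
    rcases eq_or_ne x 0 with h | h
    · simp [h, hF0]
    · exact (Fpos x h).le
  -- degree of P
  have hPdeg : 0 < P.degree := by
    by_contra h
    push_neg at h
    have := Polynomial.eq_C_of_degree_le_zero h
    rw [this] at hP
    simp at hP
    exact hgne hP.symm
  have habs : Tendsto (fun x => |P.eval x|) atTop atTop := P.abs_tendsto_atTop hPdeg
  have hFbound : ∀ x : ℝ, |P.eval x| - |P.eval 0| ≤ F x := by
    intro x
    have h1 : |P.eval x| - |P.eval 0| ≤ |P.eval x - P.eval 0| := abs_sub_abs_le_abs_sub _ _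
    rwa [abs_of_nonneg (Fnonneg x)] at h1
  have top : Tendsto F atTop atTop := by
    refine tendsto_atTop_mono hFbound ?_
    simpa [sub_eq_add_neg] using tendsto_atTop_add_const_right atTop (-|P.eval 0|) habs
  have bot : Tendsto F atBot atTop := by
    set Q : Polynomial ℝ := P.comp (-X) with hQ
    have hQdeg : 0 < Q.degree := by
      rw [← Polynomial.natDegree_pos_iff_degree_pos] at hPdeg ⊢
      rw [hQ, Polynomial.natDegree_comp]
      simpa using hPdeg
    have habsQ : Tendsto (fun t => |Q.eval t|) atTop atTop := Q.abs_tendsto_atTop hQdeg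
    have hcomp : Tendsto (fun x => |P.eval x|) atBot atTop := by
      have : (fun x : ℝ => |P.eval x|) = (fun t => |Q.eval t|) ∘ Neg.neg := by
        funext x
        simp [hQ, Polynomial.eval_comp]
      rw [this]
      exact habsQ.comp tendsto_neg_atBot_atTop
    refine tendsto_atTop_mono hFbound ?_
    simpa [sub_eq_add_neg] using tendsto_atTop_add_const_right atBot (-|P.eval 0|) hcomp
  -- existence
  have key : ∀ x : ℝ, x < 0 → ∃ y : ℝ, 0 < y ∧ F y = F x := by
    intro x hx
    obtain ⟨b, hb1, hb2⟩ := ((top.eventually_ge_atTop (F x)).and (eventually_ge_atTop 0)).exists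
    have hmem : F x ∈ Icc (F 0) (F b) := ⟨by rw [hF0]; exact Fnonneg x, hb1⟩
    obtain ⟨y, hy, hFy⟩ := intermediate_value_Icc hb2 hFc.continuousOn hmem
    refine ⟨y, ?_, hFy⟩
    rcases hy.1.eq_or_lt with h | h
    · exfalso
      rw [← h, hF0] at hFy
      exact (Fpos x hx.ne).ne hFy
    · exact h
  set σ : ℝ → ℝ := fun x => if h : x < 0 then (key x h).choose else 0 with hσdef
  have hσ : ∀ x : ℝ, x < 0 → 0 < σ x ∧ F (σ x) = F x := by
    intro x hx
    simp only [hσdef, dif_pos hx]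
    exact (key x hx).choose_spec
  have huniq : ∀ x : ℝ, x < 0 → ∀ y : ℝ, 0 < y → F y = F x → y = σ x := by
    intro x hx y hy hFy
    exact mono.injOn hy.le (hσ x hx).1.le (hFy.trans (hσ x hx).2.symm)
  refine ⟨σ, fun x hx => ⟨(hσ x hx).1, (hσ x hx).2, fun y hy h => huniq x hx y hy h⟩, ?_, ?_, ?_, ?_⟩
  · -- StrictAntiOn
    intro a ha b hb hab
    have hFab : F b < F a := anti (mem_Iic.mpr ha.le) (mem_Iic.mpr hb.le) hab
    have h1 : F (σ b) < F (σ a) := by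
      rw [(hσ a ha).2, (hσ b hb).2]; exact hFab
    exact (mono.lt_iff_lt (hσ b hb).1.le (hσ a ha).1.le).1 h1
  · -- AnalyticOnNhd
    intro x₀ hx₀
    have hx₀' : x₀ < 0 := hx₀
    set b := σ x₀ with hbdef
    have hb : 0 < b := (hσ x₀ hx₀').1
    have hFb : F b = F x₀ := (hσ x₀ hx₀').2
    have hne : g.eval b ≠ 0 := (hgpos' b hb).ne'
    have hsd : HasStrictDerivAt F (g.eval b) b := by
      have := (P.hasStrictDerivAt b).sub_const (P.eval 0)
      rw [hP] at this; exact this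
    have e : HasStrictFDerivAt F (((ContinuousLinearEquiv.unitsEquivAut ℝ) (Units.mk0 (g.eval b) hne) : ℝ ≃L[ℝ] ℝ) : ℝ →L[ℝ] ℝ) b := hsd.hasStrictFDerivAt_equiv hne
    set Φ := e.toOpenPartialHomeomorph F with hΦdef
    have hcoe : (Φ : ℝ → ℝ) = F := e.toOpenPartialHomeomorph_coe
    have hsrc : b ∈ Φ.source := e.mem_toOpenPartialHomeomorph_source
    have htarget : F b ∈ Φ.target := by
      have := Φ.map_source hsrc
      rwa [hcoe] at this
    have hsymmb : Φ.symm (F b) = b := by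
      have := Φ.left_inv hsrc
      rwa [hcoe] at this
    have hFanal : ∀ y : ℝ, AnalyticAt ℝ F y := by
      intro y
      have h1 : AnalyticOnNhd ℝ (fun x : ℝ => Polynomial.eval x P) univ :=
        AnalyticOnNhd.eval_polynomial P
      exact ((h1 y (mem_univ y)).sub analyticAt_const)
    have hAsymm : AnalyticAt ℝ Φ.symm (F b) := by
      refine Φ.analyticAt_symm (i := (ContinuousLinearEquiv.unitsEquivAut ℝ) (Units.mk0 (g.eval b) hne)) htarget ?_ ?_
      · rw [hsymmb, hcoe]; exact hFanal b
      · rw [hsymmb, hcoe]; exact e.hasFDerivAt.fderiv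
    have h1 : ∀ᶠ y in 𝓝 (F b), F (Φ.symm y) = y := by
      have := Φ.eventually_right_inverse' hsrc
      rw [hcoe] at this
      filter_upwards [this] with y hy
      rw [← hcoe]; exact hy
    have h2 : ∀ᶠ y in 𝓝 (F b), 0 < Φ.symm y := by
      have hc : ContinuousAt Φ.symm (F b) := Φ.continuousAt_symm htarget
      have : Ioi (0:ℝ) ∈ 𝓝 (Φ.symm (F b)) := by rw [hsymmb]; exact Ioi_mem_nhds hb
      exact hc.preimage_mem_nhds this
    have hFx₀ : F x₀ = F b := hFb.symm
    have hev : ∀ᶠ x in 𝓝 x₀, σ x = Φ.symm (F x) := by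
      have hcont : Tendsto F (𝓝 x₀) (𝓝 (F b)) := by
        rw [← hFx₀]; exact hFc.continuousAt
      filter_upwards [hcont.eventually (h1.and h2), Iio_mem_nhds hx₀'] with x hx hxneg
      exact (huniq x hxneg _ hx.2 hx.1).symm
    have hcompA : AnalyticAt ℝ (Φ.symm ∘ F) x₀ := by
      refine AnalyticAt.comp ?_ (hFanal x₀)
      rw [hFx₀]; exact hAsymm
    exact hcompA.congr (by filter_upwards [hev] with x hx using hx.symm)
  · -- tendsto at 0
    rw [tendsto_order]
    constructor
    · intro a ha
      filter_upwards [self_mem_nhdsWithin] with x hx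
      exact lt_trans ha (hσ x hx).1
    · intro a ha
      have hFa : 0 < F a := Fpos a ha.ne'
      have : ∀ᶠ x in 𝓝 (0:ℝ), F x < F a := by
        have : Iio (F a) ∈ 𝓝 (F 0) := by rw [hF0]; exact Iio_mem_nhds hFa
        exact hFc.continuousAt.preimage_mem_nhds this
      filter_upwards [nhdsWithin_le_nhds this, self_mem_nhdsWithin] with x hx hxneg
      have h1 : F (σ x) < F a := by rw [(hσ x hxneg).2]; exact hx
      exact (mono.lt_iff_lt (hσ x hxneg).1.le ha.le).1 h1
  · -- tendsto atBot atTop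
    rw [tendsto_atTop]
    intro c
    set M : ℝ := max c 1 with hM
    have hM0 : 0 < M := lt_of_lt_of_le one_pos (le_max_right _ _)
    filter_upwards [bot.eventually_ge_atTop (F M), eventually_lt_atBot (0:ℝ)] with x hx hxneg
    have h1 : F M ≤ F (σ x) := by rw [(hσ x hxneg).2]; exact hx
    have h2 : M ≤ σ x := (mono.le_iff_le hM0.le (hσ x hxneg).1.le).1 h1
    exact le_trans (le_max_left c 1) h2
end

section
/- Let g be a real polynomial of degree 5 with x·g(x) > 0 for all x ≠ 0, and let f be a real polynomial of degree exactly 2. Then condition (iv) fails: there exist x₁ < 0 < x₂ with G(x₁) = G(x₂) and F(x₁) ≠ F(x₂). -/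
open Polynomial Filter Finset intervalIntegral

private lemma polyint_aux (p : Polynomial ℝ) (n : ℕ) (hn : p.natDegree < n) (x : ℝ) :
    ∫ t in (0 : ℝ)..x, p.eval t
      = ∑ i ∈ Finset.range n, p.coeff i * (x ^ (i + 1) / (i + 1)) := by
  have hcong : ∀ t ∈ Set.uIcc (0:ℝ) x,
      p.eval t = ∑ i ∈ Finset.range n, p.coeff i * t ^ i := fun t _ =>
    Polynomial.eval_eq_sum_range' hn t
  rw [intervalIntegral.integral_congr hcong,
    intervalIntegral.integral_finset_sum (f := fun i t => p.coeff i * t ^ i) (fun i _ =>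
      ((continuous_const.mul (continuous_pow i)).intervalIntegrable _ _))]
  refine Finset.sum_congr rfl fun i _ => ?_
  rw [intervalIntegral.integral_const_mul, integral_pow]
  norm_num

theorem condition_iv_fails_for_quadratic_f
    (g f : Polynomial ℝ)
    (hgdeg : g.natDegree = 5)
    (hgpos : ∀ x : ℝ, x ≠ 0 → x * g.eval x > 0)
    (hfdeg : f.natDegree = 2)
    (F G : ℝ → ℝ)
    (hF : ∀ x : ℝ, F x = ∫ t in (0 : ℝ)..x, f.eval t)
    (hG : ∀ x : ℝ, G x = ∫ t in (0 : ℝ)..x, g.eval t) :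
    ∃ x₁ x₂ : ℝ, x₁ < 0 ∧ 0 < x₂ ∧ G x₁ = G x₂ ∧ F x₁ ≠ F x₂ := by
  classical
  -- g is nonzero with nonzero top coefficient
  have hg0 : g ≠ 0 := fun h => by simp [h] at hgdeg
  have hgc5 : g.coeff 5 ≠ 0 := by
    have := Polynomial.leadingCoeff_ne_zero.mpr hg0
    rwa [Polynomial.leadingCoeff, hgdeg] at this
  -- antiderivative of g as a polynomial
  set PG : Polynomial ℝ :=
    ∑ i ∈ Finset.range 6, Polynomial.C (g.coeff i / (i + 1)) * Polynomial.X ^ (i + 1) with hPG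
  have hGeval : ∀ x : ℝ, G x = PG.eval x := by
    intro x
    rw [hG, polyint_aux g 6 (by omega) x, hPG]
    simp only [Polynomial.eval_finset_sum, Polynomial.eval_mul, Polynomial.eval_C,
      Polynomial.eval_pow, Polynomial.eval_X]
    refine Finset.sum_congr rfl fun i _ => ?_
    ring
  have hPGc6 : PG.coeff 6 = g.coeff 5 / 6 := by
    rw [hPG]
    simp [Polynomial.finset_sum_coeff, Polynomial.coeff_C_mul, Polynomial.coeff_X_pow,
      Finset.sum_range_succ]
    norm_num
  have hPGc6' : PG.coeff 6 ≠ 0 := by rw [hPGc6]; positivity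
  have hPGnd : 0 < PG.natDegree :=
    lt_of_lt_of_le (by norm_num) (Polynomial.le_natDegree_of_ne_zero hPGc6')
  have hPGdeg : 0 < PG.degree := Polynomial.natDegree_pos_iff_degree_pos.mp hPGnd
  -- G is continuous
  have hGcont : Continuous G := by
    have : G = fun x => PG.eval x := funext hGeval
    rw [this]; exact PG.continuous
  have hG0 : G 0 = 0 := by rw [hG]; simp
  -- G is positive away from 0
  have hGpos : ∀ x : ℝ, x ≠ 0 → 0 < G x := by
    intro x hx
    rcases lt_or_gt_of_ne hx with hneg | hpos
    · have h1 : 0 < ∫ t in x..(0:ℝ), -g.eval t := by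
        apply intervalIntegral_pos_of_pos_on
        · exact ((Polynomial.continuous g).neg.intervalIntegrable _ _)
        · intro t ht
          have := hgpos t (ne_of_lt ht.2)
          nlinarith [ht.2]
        · exact hneg
      rw [intervalIntegral.integral_neg] at h1
      rw [hG, intervalIntegral.integral_symm]
      linarith
    · rw [hG]
      apply intervalIntegral_pos_of_pos_on
      · exact ((Polynomial.continuous g).intervalIntegrable _ _)
      · intro t ht
        have := hgpos t (ne_of_gt ht.1)
        nlinarith [ht.1]
      · exact hpos
  -- G tends to infinity at +∞
  have hGtop : Tendsto G atTop atTop := by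
    have habs : Tendsto (fun x => |PG.eval x|) atTop atTop :=
      PG.abs_tendsto_atTop hPGdeg
    refine habs.congr' ?_
    filter_upwards [eventually_gt_atTop (0:ℝ)] with x hx
    rw [← hGeval, abs_of_pos (hGpos x (ne_of_gt hx))]
  -- G(-x) tends to infinity as x → +∞
  have hGbot : Tendsto (fun x => G (-x)) atTop atTop := by
    set Q : Polynomial ℝ := PG.comp (-Polynomial.X) with hQ
    have hQeval : ∀ x : ℝ, Q.eval x = PG.eval (-x) := by
      intro x; rw [hQ]; simp
    have hQdeg : 0 < Q.degree := by
      apply Polynomial.natDegree_pos_iff_degree_pos.mp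
      rw [hQ, Polynomial.natDegree_comp]
      simpa using hPGnd
    have habs : Tendsto (fun x => |Q.eval x|) atTop atTop :=
      Q.abs_tendsto_atTop hQdeg
    refine habs.congr' ?_
    filter_upwards [eventually_gt_atTop (0:ℝ)] with x hx
    have hx' : -x ≠ 0 := by simp [ne_of_gt hx]
    rw [hQeval, ← hGeval, abs_of_pos (hGpos _ hx')]
  -- explicit formula for F
  set a : ℝ := f.coeff 2 with hadef
  set b : ℝ := f.coeff 1 with hbdef
  set c : ℝ := f.coeff 0 with hcdef
  have hf0 : f ≠ 0 := fun h => by simp [h] at hfdeg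
  have ha : a ≠ 0 := by
    have := Polynomial.leadingCoeff_ne_zero.mpr hf0
    rwa [Polynomial.leadingCoeff, hfdeg] at this
  have hFeval : ∀ x : ℝ, F x = c * x + b * (x ^ 2 / 2) + a * (x ^ 3 / 3) := by
    intro x
    rw [hF, polyint_aux f 3 (by omega) x]
    simp [Finset.sum_range_succ, ← hadef, ← hbdef, ← hcdef]
    ring
  have ha2 : 0 < a ^ 2 := by positivity
  set T : ℝ := max 1 (3 * (|a * b| / 2 + |a * c|) / a ^ 2 + 1) with hT
  have hT1 : (1:ℝ) ≤ T := le_max_left _ _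
  -- the quadratic factor is positive for |x| ≥ T
  have hquad : ∀ x : ℝ, T ≤ |x| → 0 < a ^ 2 * x ^ 2 / 3 + a * b * x / 2 + a * c := by
    intro x hx
    have h1 : (1:ℝ) ≤ |x| := le_trans hT1 hx
    have h2 : 3 * (|a * b| / 2 + |a * c|) / a ^ 2 + 1 ≤ |x| :=
      le_trans (le_max_right _ _) hx
    have h4 : a * b * x ≥ -(|a * b| * |x|) := by
      have := neg_abs_le (a * b * x)
      rwa [abs_mul] at this
    have h5 : a * c ≥ -|a * c| := neg_abs_le _
    have h6 : |a * c| ≤ |a * c| * |x| := le_mul_of_one_le_right (abs_nonneg _) h1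
    set s : ℝ := |a * b| / 2 + |a * c| with hs
    have h2' : 3 * s / a ^ 2 ≤ |x| - 1 := by linarith
    have h2'' := (div_le_iff₀ ha2).mp h2'
    have h7 : 3 * s + a ^ 2 ≤ a ^ 2 * |x| := by linarith [h2'']
    have h101 := mul_le_mul_of_nonneg_right h7 (abs_nonneg x)
    have h102 : a ^ 2 * |x| * |x| = a ^ 2 * x ^ 2 := by
      rw [mul_assoc, ← sq_abs x]; ring
    have h103 : (3 * (|a * b| / 2 + |a * c|) + a ^ 2) * |x| ≤ a ^ 2 * x ^ 2 := by
      rw [← hs]; linarith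
    nlinarith [h103, mul_le_mul_of_nonneg_left h1 ha2.le, ha2]
  have haF : ∀ x : ℝ, a * F x = x * (a ^ 2 * x ^ 2 / 3 + a * b * x / 2 + a * c) := by
    intro x; rw [hFeval]; ring
  have hFpos : ∀ x : ℝ, T ≤ x → 0 < a * F x := by
    intro x hx
    have hx0 : 0 < x := lt_of_lt_of_le (by linarith) hx
    rw [haF]
    exact mul_pos hx0 (hquad x (by rwa [abs_of_pos hx0]))
  have hFneg : ∀ x : ℝ, x ≤ -T → a * F x < 0 := by
    intro x hx
    have hx0 : x < 0 := lt_of_le_of_lt hx (by linarith)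
    rw [haF]
    exact mul_neg_of_neg_of_pos hx0 (hquad x (by rw [abs_of_neg hx0]; linarith))
  -- bound of G on [-T, 0]
  obtain ⟨z, hz, hzmax⟩ : ∃ z ∈ Set.Icc (-T) 0, ∀ y ∈ Set.Icc (-T) 0, G y ≤ G z := by
    obtain ⟨z, hz, hmax⟩ := (isCompact_Icc (a := -T) (b := 0)).exists_isMaxOn
      ⟨0, by constructor <;> linarith⟩ hGcont.continuousOn
    exact ⟨z, hz, fun y hy => hmax hy⟩
  set M : ℝ := G z with hM
  -- choose x₂
  obtain ⟨x₂, hx₂⟩ : ∃ x₂, M < G x₂ ∧ T ≤ x₂ :=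
    ((hGtop.eventually_gt_atTop M).and (eventually_ge_atTop T)).exists
  obtain ⟨hMx₂, hTx₂⟩ := hx₂
  have hx₂pos : 0 < x₂ := lt_of_lt_of_le (by linarith) hTx₂
  -- choose y with G y ≥ G x₂, y < 0
  obtain ⟨u, hu⟩ : ∃ u, G x₂ ≤ G (-u) ∧ (1:ℝ) ≤ u :=
    ((hGbot.eventually_ge_atTop (G x₂)).and (eventually_ge_atTop 1)).exists
  obtain ⟨huG, hu1⟩ := hu
  have hyneg : -u ≤ 0 := by linarith
  -- IVT on [-u, 0]
  have hM0 : (0:ℝ) ≤ M := by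
    have := hzmax 0 ⟨by linarith, le_refl 0⟩
    rwa [hG0] at this
  have hmem : G x₂ ∈ Set.Icc (G 0) (G (-u)) := ⟨by rw [hG0]; linarith, huG⟩
  obtain ⟨x₁, hx₁mem, hx₁G⟩ :=
    intermediate_value_Icc' hyneg hGcont.continuousOn hmem
  -- x₁ < -T
  have hx₁T : x₁ < -T := by
    by_contra hcon
    push_neg at hcon
    have : G x₁ ≤ M := hzmax x₁ ⟨hcon, hx₁mem.2⟩
    rw [hx₁G] at this
    linarith
  have hx₁neg : x₁ < 0 := by linarith
  refine ⟨x₁, x₂, hx₁neg, hx₂pos, hx₁G, ?_⟩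
  intro hFeq
  have h1 := hFpos x₂ hTx₂
  have h2 := hFneg x₁ (by linarith)
  rw [hFeq] at h2
  linarith
end
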